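/- arXiv:1212.0507 — 3 statements merged into one kernel-verified Lean document; each statement's English description precedes it below -/
import Mathlib

section
/- Let B(Ω) be a Bergman-type space. For all r, s ∈ ℝ the following quasi-identity holds: ∫_Ω |⟨K_z, K_w⟩|^{(r−s)/2} / ‖K_w‖^r dλ(w) ≍ ∫_Ω |⟨K_z, K_w⟩|^{(r+s)/2} / (‖K_z‖^s ‖K_w‖^r) dλ(w), where the implied constants are independent of z ∈ Ω (they may depend on r and s). -/
open MeasureTheory Filter Topology Set ENNReal

noncomputable section

/-- The ambient space `ℂⁿ`. -/
abbrev Cn (n : ℕ) := Fin n → ℂ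

/-- A Bergman-type space on a domain `Ω ⊆ ℂⁿ`, following Mitkovski--Wick.
The data consists of the domain `Ω`, the involutions `φ_z` (axiom A.1), the
quasi-invariant metric `d` (axiom A.2), the finite measure `σ` together with the
reproducing kernel `K` of the space of holomorphic functions in `L²(σ)` (axiom A.3),
the measure `λ = ‖K_z‖² dσ` (axiom A.4), the kernel quasi-identity (axiom A.5),
the Rudin--Forelli estimates with constant `κ` (axiom A.6), and the blow-up of
`‖K_z‖` at infinity (axiom A.7). -/
structure BergmanTypeSpace (n : ℕ) where
  Ω : Set (Cn n)
  isOpen_domain : IsOpen Ω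
  isConnected_domain : IsConnected Ω
  zero_mem : (0 : Cn n) ∈ Ω
  /- A.1 : involutive holomorphic automorphisms with `φ z 0 = z`. -/
  φ : Cn n → Cn n → Cn n
  φ_mapsTo : ∀ z ∈ Ω, Set.MapsTo (φ z) Ω Ω
  φ_holo : ∀ z ∈ Ω, DifferentiableOn ℂ (φ z) Ω
  φ_invol : ∀ z ∈ Ω, ∀ w ∈ Ω, φ z (φ z w) = w
  φ_zero : ∀ z ∈ Ω, φ z 0 = z
  /- A.2 : a quasi-invariant metric on `Ω`, separable and finitely compact. -/
  d : Cn n → Cn n → ℝ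
  d_nonneg : ∀ z ∈ Ω, ∀ w ∈ Ω, 0 ≤ d z w
  d_eq_zero_iff : ∀ z ∈ Ω, ∀ w ∈ Ω, (d z w = 0 ↔ z = w)
  d_symm : ∀ z ∈ Ω, ∀ w ∈ Ω, d z w = d w z
  d_triangle : ∀ u ∈ Ω, ∀ v ∈ Ω, ∀ w ∈ Ω, d u w ≤ d u v + d v w
  Cd : ℝ
  one_le_Cd : 1 ≤ Cd
  d_quasiInvariant : ∀ z ∈ Ω, ∀ u ∈ Ω, ∀ v ∈ Ω,
    d (φ z u) (φ z v) ≤ Cd * d u v ∧ d u v ≤ Cd * d (φ z u) (φ z v)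
  d_separable : ∃ s : Set (Cn n), s.Countable ∧ s ⊆ Ω ∧
    ∀ z ∈ Ω, ∀ ε : ℝ, 0 < ε → ∃ w ∈ s, d z w < ε
  d_finitelyCompact : ∀ z ∈ Ω, ∀ r : ℝ, ∀ f : ℕ → Cn n,
    (∀ m, f m ∈ Ω ∧ d z (f m) ≤ r) →
    ∃ w, (w ∈ Ω ∧ d z w ≤ r) ∧ ∃ g : ℕ → ℕ, StrictMono g ∧
      Filter.Tendsto (fun m => d w (f (g m))) Filter.atTop (nhds 0)
  /- A.3 : a finite measure carried by `Ω` for which the holomorphic functions in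
  `L²(σ)` form a reproducing kernel Hilbert space with kernel `K`. -/
  σ : Measure (Cn n)
  σ_finite : IsFiniteMeasure σ
  σ_carried : σ Ωᶜ = 0
  K : Cn n → Cn n → ℂ
  K_holo : ∀ z ∈ Ω, DifferentiableOn ℂ (K z) Ω
  K_memL2 : ∀ z ∈ Ω, MemLp (K z) 2 σ
  K_reproducing : ∀ f : Cn n → ℂ, DifferentiableOn ℂ f Ω → MemLp f 2 σ → ∀ z ∈ Ω,
    f z = ∫ w, f w * (starRingEnd ℂ) (K z w) ∂σ
  Knorm : Cn n → ℝ
  Knorm_def : ∀ z, Knorm z = Real.sqrt (∫ w, ‖K z w‖ ^ 2 ∂σ)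
  Knorm_pos : ∀ z ∈ Ω, 0 < Knorm z
  Knorm_continuous : ∀ z ∈ Ω, ∀ ε : ℝ, 0 < ε → ∃ δ : ℝ, 0 < δ ∧
    ∀ w ∈ Ω, d z w < δ → |Knorm w - Knorm z| < ε
  k : Cn n → Cn n → ℂ
  k_def : ∀ z w, k z w = K z w / (Knorm z : ℂ)
  /- A.4 : the measure `λ = ‖K_z‖² dσ` is quasi-invariant and doubling. -/
  lam : Measure (Cn n)
  lam_def : lam = σ.withDensity (fun z => ENNReal.ofReal (Knorm z ^ 2))
  Clam : ℝ≥0∞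
  Clam_lt_top : Clam < ⊤
  lam_quasiInvariant : ∀ z ∈ Ω, ∀ E : Set (Cn n), MeasurableSet E → E ⊆ Ω →
    lam E ≤ Clam * lam (Ω ∩ φ z ⁻¹' E) ∧ lam (Ω ∩ φ z ⁻¹' E) ≤ Clam * lam E
  Cdbl : ℝ≥0∞
  Cdbl_lt_top : Cdbl < ⊤
  lam_doubling : ∀ z ∈ Ω, ∀ r : ℝ, 0 < r →
    lam {w ∈ Ω | d z w < 2 * r} ≤ Cdbl * lam {w ∈ Ω | d z w < r}
  /- A.5 : `|⟨k_z, k_w⟩| ≃ 1 / ‖K_{φ_z(w)}‖`. -/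
  C5 : ℝ
  one_le_C5 : 1 ≤ C5
  kernel_quasi : ∀ z ∈ Ω, ∀ w ∈ Ω,
    ‖∫ u, k z u * (starRingEnd ℂ) (k w u) ∂σ‖ ≤ C5 * (1 / Knorm (φ z w)) ∧
    1 / Knorm (φ z w) ≤ C5 * ‖∫ u, k z u * (starRingEnd ℂ) (k w u) ∂σ‖
  /- A.6 : the Rudin--Forelli estimates, with constant `0 ≤ κ < 2`. -/
  κ : ℝ
  κ_nonneg : 0 ≤ κ
  κ_lt_two : κ < 2
  rudinForelli :
    (κ = 0 ∧ ∀ r : ℝ, 0 < r → ∃ C : ℝ≥0∞, C < ⊤ ∧ ∀ z ∈ Ω,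
      (∫⁻ w, (‖∫ u, K z u * (starRingEnd ℂ) (K w u) ∂σ‖₊ : ℝ≥0∞) ^ r /
        ((ENNReal.ofReal (Knorm z)) ^ r * (ENNReal.ofReal (Knorm w)) ^ r) ∂lam) ≤ C) ∨
    (0 < κ ∧ ∀ r s : ℝ, κ < r → 0 < s → s < κ → ∃ C : ℝ≥0∞, C < ⊤ ∧ ∀ z ∈ Ω,
      (∫⁻ w, (‖∫ u, K z u * (starRingEnd ℂ) (K w u) ∂σ‖₊ : ℝ≥0∞) ^ ((r + s) / 2) /
        ((ENNReal.ofReal (Knorm z)) ^ s * (ENNReal.ofReal (Knorm w)) ^ r) ∂lam) ≤ C)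
  /- A.7 : `‖K_z‖ → ∞` as `d(z,0) → ∞`. -/
  Knorm_atInfty : ∀ M : ℝ, ∃ R : ℝ, ∀ z ∈ Ω, R < d z 0 → M < Knorm z

namespace BergmanTypeSpace

variable {n : ℕ}

/-- Membership in the Bergman-type space `B(Ω)`: holomorphic on `Ω` and in `L²(σ)`. -/
def memB (S : BergmanTypeSpace n) (f : Cn n → ℂ) : Prop :=
  DifferentiableOn ℂ f S.Ω ∧ MemLp f 2 S.σ

/-- The `L²(Ω; dσ)` inner product. -/
def inn (S : BergmanTypeSpace n) (f g : Cn n → ℂ) : ℂ :=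
  ∫ w, f w * (starRingEnd ℂ) (g w) ∂S.σ

/-- The `L²(Ω; dσ)` norm. -/
def nrm (S : BergmanTypeSpace n) (f : Cn n → ℂ) : ℝ :=
  Real.sqrt (∫ w, ‖f w‖ ^ 2 ∂S.σ)

/-- The orthogonal projection `P f(z) = ∫ ⟨K_w, K_z⟩ f(w) dσ(w)`. -/
def P (S : BergmanTypeSpace n) (f : Cn n → ℂ) : Cn n → ℂ :=
  fun z => ∫ w, (S.inn (S.K w) (S.K z)) * f w ∂S.σ

/-- The Toeplitz operator `T_u = P M_u`. -/
def toeplitz (S : BergmanTypeSpace n) (u : Cn n → ℂ) (f : Cn n → ℂ) : Cn n → ℂ :=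
  S.P (fun w => u w * f w)

/-- The Hankel operator `H_u = (I - P) M_u`. -/
def hankel (S : BergmanTypeSpace n) (u : Cn n → ℂ) (f : Cn n → ℂ) : Cn n → ℂ :=
  fun w => u w * f w - S.P (fun x => u x * f x) w

/-- The adapted translation `U_z f(w) = f(φ_z(w)) k_z(w)`. -/
def U (S : BergmanTypeSpace n) (z : Cn n) (f : Cn n → ℂ) : Cn n → ℂ :=
  fun w => f (S.φ z w) * S.k z w

/-- The filter of points of `Ω` with `d(z,0) → ∞`. -/
def toInfty (S : BergmanTypeSpace n) : Filter (Cn n) :=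
  (Filter.atTop.comap (fun z => S.d z 0)) ⊓ Filter.principal S.Ω

/-- `Tad` is an adjoint of `T` as an operator on `B(Ω)`. -/
def IsAdjointPair (S : BergmanTypeSpace n) (T Tad : (Cn n → ℂ) → (Cn n → ℂ)) : Prop :=
  Set.MapsTo Tad {f | S.memB f} {f | S.memB f} ∧
  ∀ f g, S.memB f → S.memB g → S.inn (T f) g = S.inn f (Tad g)

/-- Compactness of an operator on `B(Ω)`: the image of any sequence in the unit ball
has a Cauchy (in `L²(σ)`) subsequence. -/
def IsCompactOp (S : BergmanTypeSpace n) (T : (Cn n → ℂ) → (Cn n → ℂ)) : Prop :=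
  Set.MapsTo T {f | S.memB f} {f | S.memB f} ∧
  ∀ f : ℕ → (Cn n → ℂ), (∀ m, S.memB (f m) ∧ S.nrm (f m) ≤ 1) →
    ∃ g : ℕ → ℕ, StrictMono g ∧ ∀ ε : ℝ, 0 < ε → ∃ N : ℕ, ∀ p ≥ N, ∀ q ≥ N,
      S.nrm (fun w => T (f (g p)) w - T (f (g q)) w) < ε

/-- The operator norm (of an operator defined on `B(Ω)`, with values in `L²(σ)`). -/
def opNorm (S : BergmanTypeSpace n) (T : (Cn n → ℂ) → (Cn n → ℂ)) : ℝ :=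
  sInf {C : ℝ | 0 ≤ C ∧ ∀ f, S.memB f → S.nrm (T f) ≤ C * S.nrm f}

/-- The essential norm `‖T‖ₑ = inf {‖T - A‖ : A compact}`. -/
def essNorm (S : BergmanTypeSpace n) (T : (Cn n → ℂ) → (Cn n → ℂ)) : ℝ :=
  sInf {c : ℝ | ∃ A, S.IsCompactOp A ∧ c = S.opNorm (fun f => fun w => T f w - A f w)}

/-- A strong Bergman-type space: equalities in axioms A.2, A.4 and A.5. -/
def IsStrong (S : BergmanTypeSpace n) : Prop :=
  (∀ z ∈ S.Ω, ∀ u ∈ S.Ω, ∀ v ∈ S.Ω, S.d (S.φ z u) (S.φ z v) = S.d u v) ∧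
  (∀ z ∈ S.Ω, ∀ E : Set (Cn n), MeasurableSet E → E ⊆ S.Ω →
    S.lam (S.Ω ∩ S.φ z ⁻¹' E) = S.lam E) ∧
  (∀ z ∈ S.Ω, ∀ w ∈ S.Ω, ‖S.inn (S.k z) (S.k w)‖ = 1 / S.Knorm (S.φ z w))

/-- A product `T_{u₁} T_{u₂} ⋯ T_{uₖ}` of Toeplitz operators. -/
def toeplitzProd (S : BergmanTypeSpace n) : List (Cn n → ℂ) → ((Cn n → ℂ) → (Cn n → ℂ))
  | [] => id
  | u :: us => fun f => S.toeplitz u (S.toeplitzProd us f)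

/-- Symbols in `L∞(Ω)` (bounded measurable on `Ω`). -/
def IsBoundedSymbol (S : BergmanTypeSpace n) (u : Cn n → ℂ) : Prop :=
  Measurable u ∧ ∃ M : ℝ, ∀ w ∈ S.Ω, ‖u w‖ ≤ M

/-- Symbols in `BUC(Ω,d)`: bounded and `d`-uniformly continuous on `Ω`. -/
def IsBUCSymbol (S : BergmanTypeSpace n) (u : Cn n → ℂ) : Prop :=
  S.IsBoundedSymbol u ∧
  ∀ ε : ℝ, 0 < ε → ∃ δ : ℝ, 0 < δ ∧ ∀ z ∈ S.Ω, ∀ w ∈ S.Ω, S.d z w < δ → ‖u z - u w‖ < ε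

/-- A finite sum of finite products of Toeplitz operators whose symbols all satisfy `Q`. -/
def IsToeplitzPolynomial (S : BergmanTypeSpace n) (Q : (Cn n → ℂ) → Prop)
    (A : (Cn n → ℂ) → (Cn n → ℂ)) : Prop :=
  ∃ (L : ℕ) (us : Fin L → List (Cn n → ℂ)),
    (∀ l, ∀ u ∈ us l, Q u) ∧ ∀ f x, A f x = ∑ l, S.toeplitzProd (us l) f x

/-- Membership in the norm closure of the finite sums of finite products of Toeplitz
operators with symbols satisfying `Q` (e.g. the Toeplitz algebra `𝒯_{L^∞}`). -/
def InToeplitzAlgebra (S : BergmanTypeSpace n) (Q : (Cn n → ℂ) → Prop)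
    (T : (Cn n → ℂ) → (Cn n → ℂ)) : Prop :=
  Set.MapsTo T {f | S.memB f} {f | S.memB f} ∧
  ∀ ε : ℝ, 0 < ε → ∃ A, S.IsToeplitzPolynomial Q A ∧
    ∀ f, S.memB f → S.nrm (fun x => T f x - A f x) ≤ ε * S.nrm f

end BergmanTypeSpace

section Aux

private lemma ofReal_norm_eq_coe_nnnorm {E : Type*} [SeminormedAddCommGroup E] (a : E) :
    ENNReal.ofReal ‖a‖ = (‖a‖₊ : ℝ≥0∞) :=
  ENNReal.ofReal_eq_coe_nnreal (norm_nonneg _)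

private lemma log_bound {c5 x y : ℝ} (hx : 0 < x) (hy : 0 < y) (hc5 : 0 < c5)
    (h1 : x ≤ c5 * y) (h2 : y ≤ c5 * x) : |Real.log x - Real.log y| ≤ Real.log c5 := by
  rw [abs_le]
  constructor
  · have := Real.log_le_log hy h2
    rw [Real.log_mul (ne_of_gt hc5) (ne_of_gt hx)] at this
    linarith
  · have := Real.log_le_log hx h1
    rw [Real.log_mul (ne_of_gt hc5) (ne_of_gt hy)] at this
    linarith

private lemma real_key (c5 r s a b P P' Nz Nw M : ℝ) (hc5 : 1 ≤ c5)
    (ha : a = (r - s) / 2) (hb : b = (r + s) / 2)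
    (hP : 0 < P) (hP' : 0 < P') (hNz : 0 < Nz) (hNw : 0 < Nw) (hM : 0 < M)
    (h1 : P * M ≤ c5 * (Nz * Nw)) (h2 : Nz * Nw ≤ c5 * (P * M))
    (h1' : P' * Nw ≤ c5 * (Nz * M)) (h2' : Nz * M ≤ c5 * (P' * Nw)) :
    P ^ b * M ^ r ≤ c5 ^ (|a| + |b|) * (P' ^ a * (Nz ^ s * Nw ^ r)) := by
  have hc5' : (0 : ℝ) < c5 := lt_of_lt_of_le one_pos hc5
  have hlc0 : 0 ≤ Real.log c5 := Real.log_nonneg hc5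
  have hu : |Real.log (P * M) - Real.log (Nz * Nw)| ≤ Real.log c5 :=
    log_bound (mul_pos hP hM) (mul_pos hNz hNw) hc5' h1 h2
  have hv : |Real.log (P' * Nw) - Real.log (Nz * M)| ≤ Real.log c5 :=
    log_bound (mul_pos hP' hNw) (mul_pos hNz hM) hc5' h1' h2'
  rw [Real.log_mul (ne_of_gt hP) (ne_of_gt hM), Real.log_mul (ne_of_gt hNz) (ne_of_gt hNw)] at hu
  rw [Real.log_mul (ne_of_gt hP') (ne_of_gt hNw), Real.log_mul (ne_of_gt hNz) (ne_of_gt hM)] at hv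
  have H1 : b * ((Real.log P + Real.log M) - (Real.log Nz + Real.log Nw))
      ≤ |b| * Real.log c5 := by
    calc b * ((Real.log P + Real.log M) - (Real.log Nz + Real.log Nw))
        ≤ |b * ((Real.log P + Real.log M) - (Real.log Nz + Real.log Nw))| := le_abs_self _
      _ = |b| * |(Real.log P + Real.log M) - (Real.log Nz + Real.log Nw)| := abs_mul _ _
      _ ≤ |b| * Real.log c5 := mul_le_mul_of_nonneg_left hu (abs_nonneg b)
  have H2 : -(|a| * Real.log c5)
      ≤ a * ((Real.log P' + Real.log Nw) - (Real.log Nz + Real.log M)) := by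
    have habs : |a * ((Real.log P' + Real.log Nw) - (Real.log Nz + Real.log M))|
        ≤ |a| * Real.log c5 := by
      rw [abs_mul]
      exact mul_le_mul_of_nonneg_left hv (abs_nonneg a)
    have := neg_abs_le (a * ((Real.log P' + Real.log Nw) - (Real.log Nz + Real.log M)))
    linarith
  rw [Real.rpow_def_of_pos hP, Real.rpow_def_of_pos hM, Real.rpow_def_of_pos hc5',
    Real.rpow_def_of_pos hP', Real.rpow_def_of_pos hNz, Real.rpow_def_of_pos hNw,
    ← Real.exp_add, ← Real.exp_add, ← Real.exp_add, ← Real.exp_add]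
  rw [Real.exp_le_exp]
  subst ha hb
  nlinarith [H1, H2]

private lemma kernel_bounds {n : ℕ} (S : BergmanTypeSpace n) {z w : Cn n}
    (hz : z ∈ S.Ω) (hw : w ∈ S.Ω) :
    0 < ‖S.inn (S.K z) (S.K w)‖ ∧
    ‖S.inn (S.K z) (S.K w)‖ * S.Knorm (S.φ z w) ≤ S.C5 * (S.Knorm z * S.Knorm w) ∧
    S.Knorm z * S.Knorm w ≤ S.C5 * (‖S.inn (S.K z) (S.K w)‖ * S.Knorm (S.φ z w)) := by
  have hNz := S.Knorm_pos z hz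
  have hNw := S.Knorm_pos w hw
  have hφ : S.φ z w ∈ S.Ω := S.φ_mapsTo z hz hw
  have hM := S.Knorm_pos _ hφ
  have hC5 : (0 : ℝ) < S.C5 := lt_of_lt_of_le one_pos S.one_le_C5
  have hkK : S.inn (S.k z) (S.k w)
      = S.inn (S.K z) (S.K w) / ((S.Knorm z : ℂ) * (S.Knorm w : ℂ)) := by
    have hfun : ∀ u, S.k z u * (starRingEnd ℂ) (S.k w u)
        = (S.K z u * (starRingEnd ℂ) (S.K w u)) / ((S.Knorm z : ℂ) * (S.Knorm w : ℂ)) := by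
      intro u
      rw [S.k_def, S.k_def, map_div₀, Complex.conj_ofReal]
      ring
    unfold BergmanTypeSpace.inn
    simp_rw [hfun]
    rw [integral_div]
  have hnorm : ‖S.inn (S.k z) (S.k w)‖
      = ‖S.inn (S.K z) (S.K w)‖ / (S.Knorm z * S.Knorm w) := by
    rw [hkK, norm_div, norm_mul, Complex.norm_real, Complex.norm_real,
      Real.norm_eq_abs, Real.norm_eq_abs, abs_of_pos hNz, abs_of_pos hNw]
  have h1 := (S.kernel_quasi z hz w hw).1
  have h2 := (S.kernel_quasi z hz w hw).2
  rw [show (∫ u, S.k z u * (starRingEnd ℂ) (S.k w u) ∂S.σ) = S.inn (S.k z) (S.k w) from rfl,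
    hnorm] at h1 h2
  have key1 : ‖S.inn (S.K z) (S.K w)‖ * S.Knorm (S.φ z w)
      ≤ S.C5 * (S.Knorm z * S.Knorm w) := by
    rw [mul_one_div, div_le_div_iff₀ (mul_pos hNz hNw) hM] at h1
    exact h1
  have key2 : S.Knorm z * S.Knorm w
      ≤ S.C5 * (‖S.inn (S.K z) (S.K w)‖ * S.Knorm (S.φ z w)) := by
    rw [← mul_div_assoc, div_le_div_iff₀ hM (mul_pos hNz hNw)] at h2
    nlinarith [h2]
  have hP : 0 < ‖S.inn (S.K z) (S.K w)‖ := by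
    rcases lt_or_eq_of_le (norm_nonneg (S.inn (S.K z) (S.K w))) with h | h
    · exact h
    · exfalso
      rw [← h] at key2
      nlinarith [mul_pos hNz hNw]
  exact ⟨hP, key1, key2⟩

private lemma pointwise1 {n : ℕ} (S : BergmanTypeSpace n) (r s : ℝ) {z w : Cn n}
    (hz : z ∈ S.Ω) (hw : w ∈ S.Ω) :
    (‖S.inn (S.K z) (S.K w)‖₊ : ℝ≥0∞) ^ ((r + s) / 2) /
        ((ENNReal.ofReal (S.Knorm z)) ^ s * (ENNReal.ofReal (S.Knorm w)) ^ r) ≤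
      ENNReal.ofReal (S.C5 ^ (|(r - s) / 2| + |(r + s) / 2|)) *
        ((‖S.inn (S.K z) (S.K (S.φ z w))‖₊ : ℝ≥0∞) ^ ((r - s) / 2) /
          (ENNReal.ofReal (S.Knorm (S.φ z w))) ^ r) := by
  have hNz := S.Knorm_pos z hz
  have hNw := S.Knorm_pos w hw
  have hφ : S.φ z w ∈ S.Ω := S.φ_mapsTo z hz hw
  have hM := S.Knorm_pos _ hφ
  have hC5 : (0 : ℝ) < S.C5 := lt_of_lt_of_le one_pos S.one_le_C5
  obtain ⟨hP, h1, h2⟩ := kernel_bounds S hz hw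
  obtain ⟨hP', h1', h2'⟩ := kernel_bounds S hz hφ
  rw [S.φ_invol z hz w hw] at h1' h2'
  have hk := real_key S.C5 r s ((r - s) / 2) ((r + s) / 2)
    ‖S.inn (S.K z) (S.K w)‖ ‖S.inn (S.K z) (S.K (S.φ z w))‖
    (S.Knorm z) (S.Knorm w) (S.Knorm (S.φ z w)) S.one_le_C5 rfl rfl
    hP hP' hNz hNw hM h1 h2 h1' h2'
  have hreal : ‖S.inn (S.K z) (S.K w)‖ ^ ((r + s) / 2) / (S.Knorm z ^ s * S.Knorm w ^ r)
      ≤ S.C5 ^ (|(r - s) / 2| + |(r + s) / 2|) *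
        (‖S.inn (S.K z) (S.K (S.φ z w))‖ ^ ((r - s) / 2) / S.Knorm (S.φ z w) ^ r) := by
    rw [← mul_div_assoc, div_le_div_iff₀ (by positivity) (by positivity)]
    nlinarith [hk]
  calc (‖S.inn (S.K z) (S.K w)‖₊ : ℝ≥0∞) ^ ((r + s) / 2) /
        ((ENNReal.ofReal (S.Knorm z)) ^ s * (ENNReal.ofReal (S.Knorm w)) ^ r)
      = ENNReal.ofReal
        (‖S.inn (S.K z) (S.K w)‖ ^ ((r + s) / 2) / (S.Knorm z ^ s * S.Knorm w ^ r)) := by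
        rw [← ofReal_norm_eq_coe_nnnorm, ENNReal.ofReal_rpow_of_pos hP,
          ENNReal.ofReal_rpow_of_pos hNz, ENNReal.ofReal_rpow_of_pos hNw,
          ← ENNReal.ofReal_mul (by positivity), ← ENNReal.ofReal_div_of_pos (by positivity)]
    _ ≤ ENNReal.ofReal (S.C5 ^ (|(r - s) / 2| + |(r + s) / 2|) *
        (‖S.inn (S.K z) (S.K (S.φ z w))‖ ^ ((r - s) / 2) / S.Knorm (S.φ z w) ^ r)) :=
        ENNReal.ofReal_le_ofReal hreal
    _ = ENNReal.ofReal (S.C5 ^ (|(r - s) / 2| + |(r + s) / 2|)) *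
        ((‖S.inn (S.K z) (S.K (S.φ z w))‖₊ : ℝ≥0∞) ^ ((r - s) / 2) /
          (ENNReal.ofReal (S.Knorm (S.φ z w))) ^ r) := by
        rw [ENNReal.ofReal_mul (by positivity), ENNReal.ofReal_div_of_pos (by positivity),
          ← ENNReal.ofReal_rpow_of_pos hP', ← ENNReal.ofReal_rpow_of_pos hM,
          ofReal_norm_eq_coe_nnnorm]

private lemma pointwise2 {n : ℕ} (S : BergmanTypeSpace n) (r s : ℝ) {z w : Cn n}
    (hz : z ∈ S.Ω) (hw : w ∈ S.Ω) :
    (‖S.inn (S.K z) (S.K w)‖₊ : ℝ≥0∞) ^ ((r - s) / 2) /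
        (ENNReal.ofReal (S.Knorm w)) ^ r ≤
      ENNReal.ofReal (S.C5 ^ (|(r - s) / 2| + |(r + s) / 2|)) *
        ((‖S.inn (S.K z) (S.K (S.φ z w))‖₊ : ℝ≥0∞) ^ ((r + s) / 2) /
          ((ENNReal.ofReal (S.Knorm z)) ^ s *
            (ENNReal.ofReal (S.Knorm (S.φ z w))) ^ r)) := by
  have hNz := S.Knorm_pos z hz
  have hNw := S.Knorm_pos w hw
  have hφ : S.φ z w ∈ S.Ω := S.φ_mapsTo z hz hw
  have hM := S.Knorm_pos _ hφ
  have hC5 : (0 : ℝ) < S.C5 := lt_of_lt_of_le one_pos S.one_le_C5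
  obtain ⟨hP, h1, h2⟩ := kernel_bounds S hz hw
  obtain ⟨hP', h1', h2'⟩ := kernel_bounds S hz hφ
  rw [S.φ_invol z hz w hw] at h1' h2'
  have hk := real_key S.C5 r (-s) ((r + s) / 2) ((r - s) / 2)
    ‖S.inn (S.K z) (S.K w)‖ ‖S.inn (S.K z) (S.K (S.φ z w))‖
    (S.Knorm z) (S.Knorm w) (S.Knorm (S.φ z w)) S.one_le_C5 (by ring) (by ring)
    hP hP' hNz hNw hM h1 h2 h1' h2'
  rw [Real.rpow_neg hNz.le, add_comm |(r + s) / 2| |(r - s) / 2|] at hk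
  have hNzs : (0 : ℝ) < S.Knorm z ^ s := Real.rpow_pos_of_pos hNz s
  have hk2 : ‖S.inn (S.K z) (S.K w)‖ ^ ((r - s) / 2) * (S.Knorm z ^ s * S.Knorm (S.φ z w) ^ r)
      ≤ S.C5 ^ (|(r - s) / 2| + |(r + s) / 2|) *
        (‖S.inn (S.K z) (S.K (S.φ z w))‖ ^ ((r + s) / 2) * S.Knorm w ^ r) := by
    have h3 := mul_le_mul_of_nonneg_right hk hNzs.le
    calc ‖S.inn (S.K z) (S.K w)‖ ^ ((r - s) / 2) * (S.Knorm z ^ s * S.Knorm (S.φ z w) ^ r)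
        = ‖S.inn (S.K z) (S.K w)‖ ^ ((r - s) / 2) * S.Knorm (S.φ z w) ^ r * S.Knorm z ^ s := by
          ring
      _ ≤ S.C5 ^ (|(r - s) / 2| + |(r + s) / 2|) *
          (‖S.inn (S.K z) (S.K (S.φ z w))‖ ^ ((r + s) / 2) *
            ((S.Knorm z ^ s)⁻¹ * S.Knorm w ^ r)) * S.Knorm z ^ s := h3
      _ = S.C5 ^ (|(r - s) / 2| + |(r + s) / 2|) *
          (‖S.inn (S.K z) (S.K (S.φ z w))‖ ^ ((r + s) / 2) * S.Knorm w ^ r) := by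
          field_simp
  have hreal : ‖S.inn (S.K z) (S.K w)‖ ^ ((r - s) / 2) / S.Knorm w ^ r
      ≤ S.C5 ^ (|(r - s) / 2| + |(r + s) / 2|) *
        (‖S.inn (S.K z) (S.K (S.φ z w))‖ ^ ((r + s) / 2) /
          (S.Knorm z ^ s * S.Knorm (S.φ z w) ^ r)) := by
    rw [← mul_div_assoc, div_le_div_iff₀ (by positivity) (by positivity)]
    nlinarith [hk2]
  calc (‖S.inn (S.K z) (S.K w)‖₊ : ℝ≥0∞) ^ ((r - s) / 2) / (ENNReal.ofReal (S.Knorm w)) ^ r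
      = ENNReal.ofReal (‖S.inn (S.K z) (S.K w)‖ ^ ((r - s) / 2) / S.Knorm w ^ r) := by
        rw [← ofReal_norm_eq_coe_nnnorm, ENNReal.ofReal_rpow_of_pos hP,
          ENNReal.ofReal_rpow_of_pos hNw, ← ENNReal.ofReal_div_of_pos (by positivity)]
    _ ≤ ENNReal.ofReal (S.C5 ^ (|(r - s) / 2| + |(r + s) / 2|) *
        (‖S.inn (S.K z) (S.K (S.φ z w))‖ ^ ((r + s) / 2) /
          (S.Knorm z ^ s * S.Knorm (S.φ z w) ^ r))) := ENNReal.ofReal_le_ofReal hreal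
    _ = ENNReal.ofReal (S.C5 ^ (|(r - s) / 2| + |(r + s) / 2|)) *
        ((‖S.inn (S.K z) (S.K (S.φ z w))‖₊ : ℝ≥0∞) ^ ((r + s) / 2) /
          ((ENNReal.ofReal (S.Knorm z)) ^ s *
            (ENNReal.ofReal (S.Knorm (S.φ z w))) ^ r)) := by
        rw [ENNReal.ofReal_mul (by positivity), ENNReal.ofReal_div_of_pos (by positivity),
          ENNReal.ofReal_mul hNzs.le, ← ENNReal.ofReal_rpow_of_pos hP',
          ← ENNReal.ofReal_rpow_of_pos hM, ← ENNReal.ofReal_rpow_of_pos hNz,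
          ofReal_norm_eq_coe_nnnorm]

private lemma key_cov {n : ℕ} (S : BergmanTypeSpace n) {z : Cn n} (hz : z ∈ S.Ω)
    (f g : Cn n → ℝ≥0∞) (C : ℝ≥0∞) (hC : C ≠ ⊤)
    (hfg : ∀ w ∈ S.Ω, f w ≤ C * g (S.φ z w)) :
    ∫⁻ w, f w ∂S.lam ≤ C * (S.Clam * ∫⁻ w, g w ∂S.lam) := by
  classical
  set ψ : Cn n → Cn n := fun w => if w ∈ S.Ω then S.φ z w else 0 with hψ
  have hΩopen := S.isOpen_domain
  have hΩm : MeasurableSet S.Ω := hΩopen.measurableSet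
  have hcont : ContinuousOn (S.φ z) S.Ω := (S.φ_holo z hz).continuousOn
  have hψmeas : Measurable ψ := by
    apply measurable_of_isOpen
    intro t ht
    by_cases h0 : (0 : Cn n) ∈ t
    · have he : ψ ⁻¹' t = (S.Ω ∩ S.φ z ⁻¹' t) ∪ S.Ωᶜ := by
        ext w; by_cases hw : w ∈ S.Ω <;> simp [ψ, hw, h0]
      rw [he]
      exact ((hcont.isOpen_inter_preimage hΩopen ht).measurableSet).union hΩm.compl
    · have he : ψ ⁻¹' t = S.Ω ∩ S.φ z ⁻¹' t := by
        ext w; by_cases hw : w ∈ S.Ω <;> simp [ψ, hw, h0]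
      rw [he]
      exact (hcont.isOpen_inter_preimage hΩopen ht).measurableSet
  have hnull : S.lam S.Ωᶜ = 0 := by
    rw [S.lam_def, withDensity_apply _ hΩm.compl]
    exact setLIntegral_measure_zero _ _ S.σ_carried
  have haeΩ : ∀ᵐ w ∂S.lam, w ∈ S.Ω := by
    have he : {w | ¬ w ∈ S.Ω} = S.Ωᶜ := rfl
    rw [ae_iff, he]
    exact hnull
  have hmle : S.lam ≤ S.Clam • (S.lam.map ψ) := by
    rw [Measure.le_iff]
    intro E hE
    have hsub : E ⊆ (E ∩ S.Ω) ∪ S.Ωᶜ := by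
      intro x hx
      by_cases h : x ∈ S.Ω
      · exact Or.inl ⟨hx, h⟩
      · exact Or.inr h
    have h1 : S.lam E ≤ S.lam (E ∩ S.Ω) := by
      calc S.lam E ≤ S.lam ((E ∩ S.Ω) ∪ S.Ωᶜ) := measure_mono hsub
        _ ≤ S.lam (E ∩ S.Ω) + S.lam S.Ωᶜ := measure_union_le _ _
        _ = S.lam (E ∩ S.Ω) := by rw [hnull, add_zero]
    have h2 := (S.lam_quasiInvariant z hz (E ∩ S.Ω) (hE.inter hΩm) Set.inter_subset_right).1
    have h3 : S.Ω ∩ S.φ z ⁻¹' (E ∩ S.Ω) ⊆ ψ ⁻¹' E := by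
      rintro w ⟨hwΩ, hwp⟩
      have : ψ w = S.φ z w := if_pos hwΩ
      simp only [Set.mem_preimage, this]
      exact hwp.1
    calc S.lam E ≤ S.lam (E ∩ S.Ω) := h1
      _ ≤ S.Clam * S.lam (S.Ω ∩ S.φ z ⁻¹' (E ∩ S.Ω)) := h2
      _ ≤ S.Clam * S.lam (ψ ⁻¹' E) := by
          exact mul_le_mul_right (measure_mono h3) _
      _ = S.Clam * (S.lam.map ψ) E := by rw [Measure.map_apply hψmeas hE]
      _ = (S.Clam • (S.lam.map ψ)) E := rfl
  have step1 : ∫⁻ w, f w ∂S.lam ≤ C * ∫⁻ w, g (ψ w) ∂S.lam := by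
    have hae : ∀ᵐ w ∂S.lam, f w ≤ C * g (ψ w) := by
      filter_upwards [haeΩ] with w hw
      have : ψ w = S.φ z w := if_pos hw
      rw [this]
      exact hfg w hw
    calc ∫⁻ w, f w ∂S.lam ≤ ∫⁻ w, C * g (ψ w) ∂S.lam := lintegral_mono_ae hae
      _ = C * ∫⁻ w, g (ψ w) ∂S.lam := lintegral_const_mul' _ _ hC
  have step2 : ∫⁻ w, g (ψ w) ∂S.lam ≤ S.Clam * ∫⁻ w, g w ∂S.lam := by
    have e1 : ∫⁻ w, g (ψ w) ∂S.lam ≤ ∫⁻ w, g (ψ w) ∂(S.Clam • (S.lam.map ψ)) :=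
      lintegral_mono' hmle le_rfl
    have e2 : ∫⁻ w, g (ψ w) ∂(S.Clam • (S.lam.map ψ))
        = S.Clam * ∫⁻ w, g (ψ w) ∂(S.lam.map ψ) := lintegral_smul_measure _ _
    have e3 : ∫⁻ w, g (ψ w) ∂(S.lam.map ψ) ≤ ∫⁻ w, g (ψ (ψ w)) ∂S.lam :=
      lintegral_map_le _ ψ
    have e4 : ∫⁻ w, g (ψ (ψ w)) ∂S.lam = ∫⁻ w, g w ∂S.lam := by
      apply lintegral_congr_ae
      filter_upwards [haeΩ] with w hw
      have hw1 : ψ w = S.φ z w := if_pos hw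
      have hw2 : S.φ z w ∈ S.Ω := S.φ_mapsTo z hz hw
      rw [hw1, show ψ (S.φ z w) = S.φ z (S.φ z w) from if_pos hw2, S.φ_invol z hz w hw]
    calc ∫⁻ w, g (ψ w) ∂S.lam ≤ S.Clam * ∫⁻ w, g (ψ w) ∂(S.lam.map ψ) := e1.trans e2.le
      _ ≤ S.Clam * ∫⁻ w, g (ψ (ψ w)) ∂S.lam := mul_le_mul_right e3 _
      _ = S.Clam * ∫⁻ w, g w ∂S.lam := by rw [e4]
  exact step1.trans (mul_le_mul_right step2 C)

end Aux

/-- the Rudin–Forelli quasi-identity (Lemma 2.1 of the paper).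
For all `r, s ∈ ℝ`,
`∫_Ω |⟨K_z,K_w⟩|^{(r−s)/2}/‖K_w‖^r dλ(w) ≍ ∫_Ω |⟨K_z,K_w⟩|^{(r+s)/2}/(‖K_z‖^s ‖K_w‖^r) dλ(w)`
with constants independent of `z ∈ Ω`. -/
theorem statement0 (n : ℕ) (S : BergmanTypeSpace n) (r s : ℝ) :
    ∃ c : ℝ≥0∞, c < ⊤ ∧ ∀ z ∈ S.Ω,
      (∫⁻ w, (‖S.inn (S.K z) (S.K w)‖₊ : ℝ≥0∞) ^ ((r - s) / 2) /
          (ENNReal.ofReal (S.Knorm w)) ^ r ∂S.lam) ≤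
        c * (∫⁻ w, (‖S.inn (S.K z) (S.K w)‖₊ : ℝ≥0∞) ^ ((r + s) / 2) /
          ((ENNReal.ofReal (S.Knorm z)) ^ s * (ENNReal.ofReal (S.Knorm w)) ^ r) ∂S.lam) ∧
      (∫⁻ w, (‖S.inn (S.K z) (S.K w)‖₊ : ℝ≥0∞) ^ ((r + s) / 2) /
          ((ENNReal.ofReal (S.Knorm z)) ^ s * (ENNReal.ofReal (S.Knorm w)) ^ r) ∂S.lam) ≤
        c * (∫⁻ w, (‖S.inn (S.K z) (S.K w)‖₊ : ℝ≥0∞) ^ ((r - s) / 2) /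
          (ENNReal.ofReal (S.Knorm w)) ^ r ∂S.lam) := by
  refine ⟨ENNReal.ofReal (S.C5 ^ (|(r - s) / 2| + |(r + s) / 2|)) * S.Clam, ?_, ?_⟩
  · exact ENNReal.mul_lt_top ENNReal.ofReal_lt_top S.Clam_lt_top
  intro z hz
  constructor
  · have h := key_cov S hz
      (fun w => (‖S.inn (S.K z) (S.K w)‖₊ : ℝ≥0∞) ^ ((r - s) / 2) /
        (ENNReal.ofReal (S.Knorm w)) ^ r)
      (fun w => (‖S.inn (S.K z) (S.K w)‖₊ : ℝ≥0∞) ^ ((r + s) / 2) /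
        ((ENNReal.ofReal (S.Knorm z)) ^ s * (ENNReal.ofReal (S.Knorm w)) ^ r))
      (ENNReal.ofReal (S.C5 ^ (|(r - s) / 2| + |(r + s) / 2|))) ENNReal.ofReal_ne_top
      (fun w hw => pointwise2 S r s hz hw)
    rw [mul_assoc]
    exact h
  · have h := key_cov S hz
      (fun w => (‖S.inn (S.K z) (S.K w)‖₊ : ℝ≥0∞) ^ ((r + s) / 2) /
        ((ENNReal.ofReal (S.Knorm z)) ^ s * (ENNReal.ofReal (S.Knorm w)) ^ r))
      (fun w => (‖S.inn (S.K z) (S.K w)‖₊ : ℝ≥0∞) ^ ((r - s) / 2) /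
        (ENNReal.ofReal (S.Knorm w)) ^ r)
      (ENNReal.ofReal (S.C5 ^ (|(r - s) / 2| + |(r + s) / 2|))) ENNReal.ofReal_ne_top
      (fun w hw => pointwise1 S r s hz hw)
    rw [mul_assoc]
    exact h
end
end

section
/- Let B(Ω) be a Bergman-type space with κ = 0, and let P f(z) := ∫_Ω ⟨K_w, K_z⟩ f(w) dσ(w) be the projection operator. Then P is bounded as an operator from L^p(Ω; dλ(w)/‖K_w‖^p) into L^p(Ω; dλ(w)/‖K_w‖^p) for all 1 ≤ p ≤ ∞ (here dλ(w)/‖K_w‖^p = ‖K_w‖^{2−p} dσ(w), and for p = ∞ the norm is sup_{w∈Ω} |f(w)|/‖K_w‖). -/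
open MeasureTheory Filter Topology Set ENNReal

noncomputable section

section Stmt1Aux

namespace Stmt1

open scoped Classical

variable {n : ℕ} (S : BergmanTypeSpace n)

/-- The kernel inner product `⟨K_z, K_w⟩`. -/
noncomputable def F (z w : Cn n) : ℂ :=
  ∫ u, S.K z u * (starRingEnd ℂ) (S.K w u) ∂S.σ

lemma F_conj (z w : Cn n) : F S w z = (starRingEnd ℂ) (F S z w) := by
  rw [F, F, ← integral_conj]
  refine integral_congr_ae (Filter.Eventually.of_forall fun u => ?_)
  simp only [map_mul, Complex.conj_conj]
  ring

lemma F_eq_K {z w : Cn n} (hz : z ∈ S.Ω) (hw : w ∈ S.Ω) : F S z w = S.K z w :=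
  (S.K_reproducing (S.K z) (S.K_holo z hz) (S.K_memL2 z hz) w hw).symm

/-- Measurable extension of `F` to the whole product space. -/
noncomputable def Fext (p : Cn n × Cn n) : ℂ :=
  if p.1 ∈ S.Ω ∧ p.2 ∈ S.Ω then F S p.1 p.2 else 0

lemma Fext_eq {z w : Cn n} (hz : z ∈ S.Ω) (hw : w ∈ S.Ω) :
    Fext S (z, w) = F S z w := if_pos ⟨hz, hw⟩

lemma Fext_symm_nnnorm (z w : Cn n) : ‖Fext S (w, z)‖₊ = ‖Fext S (z, w)‖₊ := by
  by_cases h : z ∈ S.Ω ∧ w ∈ S.Ω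
  · rw [Fext, Fext, if_pos ⟨h.2, h.1⟩, if_pos h]
    rw [F_conj]
    simp
  · rw [Fext, Fext, if_neg (fun hc => h ⟨hc.2, hc.1⟩), if_neg h]

lemma measurable_Fext : Measurable (Fext S) := by
  have hΩ : MeasurableSet S.Ω := S.isOpen_domain.measurableSet
  have contK : ∀ z ∈ S.Ω, ContinuousOn (S.K z) S.Ω := fun z hz =>
    (S.K_holo z hz).continuousOn
  -- the restriction of `F` to `Ω × Ω` as a function on the subtype
  set G : S.Ω → S.Ω → ℂ := fun i x => F S (i : Cn n) (x : Cn n) with hG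
  have h1 : ∀ x : S.Ω, Continuous fun i : S.Ω => G i x := by
    intro x
    have heq : (fun i : S.Ω => G i x) =
        fun i : S.Ω => (starRingEnd ℂ) (S.Ω.restrict (S.K (x : Cn n)) i) := by
      funext i
      rw [hG]
      simp only [Set.restrict_apply]
      show F S (i : Cn n) (x : Cn n) = (starRingEnd ℂ) (S.K (x : Cn n) (i : Cn n))
      rw [← F_eq_K S x.2 i.2, F_conj]
    rw [heq]
    exact Complex.continuous_conj.comp ((contK x x.2).restrict)
  have h2 : ∀ i : S.Ω, StronglyMeasurable (G i) := by
    intro i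
    have heq : G i = fun x : S.Ω => S.Ω.restrict (S.K (i : Cn n)) x := by
      funext x
      rw [hG]
      simp only [Set.restrict_apply]
      exact F_eq_K S i.2 x.2
    rw [heq]
    exact ((contK i i.2).restrict).stronglyMeasurable
  have hU : StronglyMeasurable (Function.uncurry G) :=
    stronglyMeasurable_uncurry_of_continuous_of_stronglyMeasurable h1 h2
  have he : MeasurableEmbedding (fun q : S.Ω × S.Ω => ((q.1 : Cn n), (q.2 : Cn n))) :=
    (MeasurableEmbedding.subtype_coe hΩ).prodMap (MeasurableEmbedding.subtype_coe hΩ)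
  have hmeas := he.measurable_extend hU.measurable
    (measurable_const : Measurable fun _ : Cn n × Cn n => (0 : ℂ))
  have hFeq : Fext S = Function.extend (fun q : S.Ω × S.Ω => ((q.1 : Cn n), (q.2 : Cn n)))
      (Function.uncurry G) (fun _ => 0) := by
    funext p
    by_cases hp : p.1 ∈ S.Ω ∧ p.2 ∈ S.Ω
    · have hrange : p = (fun q : S.Ω × S.Ω => ((q.1 : Cn n), (q.2 : Cn n)))
          (⟨p.1, hp.1⟩, ⟨p.2, hp.2⟩) := by simp
      rw [Fext, if_pos hp, hrange, he.injective.extend_apply]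
      rfl
    · rw [Fext, if_neg hp, Function.extend_apply']
      rintro ⟨q, rfl⟩
      exact hp ⟨q.1.2, q.2.2⟩
  rw [hFeq]
  exact hmeas

/-- A measurable substitute for `Knorm`. -/
noncomputable def Kn' (z : Cn n) : ℝ := Real.sqrt (Complex.re (Fext S (z, z)))

lemma measurable_Kn' : Measurable (Kn' S) :=
  Real.continuous_sqrt.measurable.comp
    (Complex.measurable_re.comp ((measurable_Fext S).comp (measurable_id.prodMk measurable_id)))

lemma Kn'_eq {z : Cn n} (hz : z ∈ S.Ω) : Kn' S z = S.Knorm z := by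
  rw [Kn', Fext, if_pos ⟨hz, hz⟩, S.Knorm_def]
  congr 1
  have hFzz : F S z z = ((∫ u, ‖S.K z u‖ ^ 2 ∂S.σ : ℝ) : ℂ) := by
    have hpt : ∀ u, S.K z u * (starRingEnd ℂ) (S.K z u) = ((‖S.K z u‖ ^ 2 : ℝ) : ℂ) := by
      intro u
      rw [Complex.mul_conj]
      norm_cast
      simp [Complex.normSq_eq_norm_sq]
    rw [F]
    simp only [hpt]
    exact integral_ofReal
  rw [hFzz, Complex.ofReal_re]

lemma enn_helper1 {a b x y : ℝ≥0∞} (ha : a ≠ ⊤) (hb : b ≠ ⊤) (hx0 : x ≠ 0) (hxt : x ≠ ⊤)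
    (hy0 : y ≠ 0) (hyt : y ≠ ⊤) :
    x * (y ^ (2:ℝ) * (a / (x * y) * (b / y))) = a * b := by
  have hxy0 : x * y ≠ 0 := mul_ne_zero hx0 hy0
  have h2 : y ^ (2:ℝ) ≠ ⊤ := ENNReal.rpow_ne_top_of_nonneg (by norm_num) hyt
  refine (ENNReal.toReal_eq_toReal_iff' ?_ ?_).mp ?_
  · exact ENNReal.mul_ne_top hxt (ENNReal.mul_ne_top h2 (ENNReal.mul_ne_top
      (ENNReal.div_lt_top ha hxy0).ne (ENNReal.div_lt_top hb hy0).ne))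
  · exact ENNReal.mul_ne_top ha hb
  · have hx' : 0 < x.toReal := ENNReal.toReal_pos hx0 hxt
    have hy' : 0 < y.toReal := ENNReal.toReal_pos hy0 hyt
    simp only [ENNReal.toReal_mul, ENNReal.toReal_div, ← ENNReal.toReal_rpow]
    rw [show (2:ℝ) = ((2:ℕ):ℝ) by norm_num, Real.rpow_natCast]
    field_simp

lemma enn_helper4 {a x y : ℝ≥0∞} (ha : a ≠ ⊤) (hx0 : x ≠ 0) (hxt : x ≠ ⊤)
    (hy0 : y ≠ 0) (hyt : y ≠ ⊤) :
    x * (y ^ (2:ℝ) * (a / (x * y))) = a * y := by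
  have hxy0 : x * y ≠ 0 := mul_ne_zero hx0 hy0
  have h2 : y ^ (2:ℝ) ≠ ⊤ := ENNReal.rpow_ne_top_of_nonneg (by norm_num) hyt
  refine (ENNReal.toReal_eq_toReal_iff' ?_ ?_).mp ?_
  · exact ENNReal.mul_ne_top hxt (ENNReal.mul_ne_top h2 (ENNReal.div_lt_top ha hxy0).ne)
  · exact ENNReal.mul_ne_top ha hyt
  · have hx' : 0 < x.toReal := ENNReal.toReal_pos hx0 hxt
    have hy' : 0 < y.toReal := ENNReal.toReal_pos hy0 hyt
    simp only [ENNReal.toReal_mul, ENNReal.toReal_div, ← ENNReal.toReal_rpow]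
    rw [show (2:ℝ) = ((2:ℕ):ℝ) by norm_num, Real.rpow_natCast]
    field_simp

lemma enn_helper2 {b y : ℝ≥0∞} (hy0 : y ≠ 0) (hyt : y ≠ ⊤) {p : ℝ} (hp : 0 < p) :
    y ^ ((2:ℝ) - p) * b ^ p = y ^ (2:ℝ) * (b / y) ^ p := by
  rw [ENNReal.div_rpow_of_nonneg _ _ hp.le, div_eq_mul_inv, ← ENNReal.rpow_neg]
  rw [show ((2:ℝ) - p) = 2 + (-p) by ring, ENNReal.rpow_add _ _ hy0 hyt]
  ring

lemma enn_helper3 {x t : ℝ≥0∞} (hx0 : x ≠ 0) (hxt : x ≠ ⊤) {p : ℝ} (hp : 0 ≤ p) :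
    x ^ ((2:ℝ) - p) * (x * t) ^ p = x ^ (2:ℝ) * t ^ p := by
  rw [ENNReal.mul_rpow_of_nonneg _ _ hp, ← mul_assoc,
    ← ENNReal.rpow_add _ _ hx0 hxt, show ((2:ℝ) - p) + p = (2:ℝ) by ring]

end Stmt1

end Stmt1Aux

set_option maxHeartbeats 1000000 in
/-- for `κ = 0` the projection `P` is bounded on
`L^p(Ω; dλ(w)/‖K_w‖^p) = L^p(Ω; ‖K_w‖^{2-p} dσ(w))` for all `1 ≤ p ≤ ∞`
(the case `p = ∞` being the weighted sup-norm statement). -/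
theorem statement1 (n : ℕ) (S : BergmanTypeSpace n) (hκ : S.κ = 0) :
    (∀ p : ℝ, 1 ≤ p →
      ∃ C : ℝ≥0∞, C < ⊤ ∧ ∀ f : Cn n → ℂ, AEStronglyMeasurable f S.σ →
        eLpNorm (S.P f) (ENNReal.ofReal p)
            (S.σ.withDensity fun w => ENNReal.ofReal (S.Knorm w ^ ((2:ℝ) - p))) ≤
          C * eLpNorm f (ENNReal.ofReal p)
            (S.σ.withDensity fun w => ENNReal.ofReal (S.Knorm w ^ ((2:ℝ) - p)))) ∧
    (∃ C : ℝ, 0 ≤ C ∧ ∀ f : Cn n → ℂ, AEStronglyMeasurable f S.σ → ∀ M : ℝ,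
      (∀ w ∈ S.Ω, ‖f w‖ ≤ M * S.Knorm w) → ∀ z ∈ S.Ω, ‖S.P f z‖ ≤ C * M * S.Knorm z) := by
  classical
  rcases S.rudinForelli with ⟨-, hRF⟩ | ⟨hpos, -⟩
  swap
  · rw [hκ] at hpos; exact absurd hpos (lt_irrefl 0)
  obtain ⟨C1, hC1top, hC1⟩ := hRF 1 one_pos
  have hC1ne : C1 ≠ ⊤ := hC1top.ne
  have hσΩ : ∀ᵐ z ∂S.σ, z ∈ S.Ω := by
    rw [MeasureTheory.ae_iff]
    exact S.σ_carried
  haveI := S.σ_finite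
  set N : Cn n → ℝ≥0∞ := fun z => ENNReal.ofReal (Stmt1.Kn' S z) with hN
  have hNmeas : Measurable N := ENNReal.measurable_ofReal.comp (Stmt1.measurable_Kn' S)
  have hNt : ∀ z, N z ≠ ⊤ := fun z => ENNReal.ofReal_ne_top
  have hN0 : ∀ z ∈ S.Ω, N z ≠ 0 := by
    intro z hz
    rw [hN]
    simp only [ne_eq, ENNReal.ofReal_eq_zero, not_le]
    rw [Stmt1.Kn'_eq S hz]
    exact S.Knorm_pos z hz
  have hNK : ∀ z ∈ S.Ω, N z = ENNReal.ofReal (S.Knorm z) := fun z hz => by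
    show ENNReal.ofReal (Stmt1.Kn' S z) = ENNReal.ofReal (S.Knorm z)
    rw [Stmt1.Kn'_eq S hz]
  set lam' : Measure (Cn n) := S.σ.withDensity (fun z => N z ^ (2:ℝ)) with hlam'
  have hdensfin : ∀ᵐ z ∂S.σ, (fun z => N z ^ (2:ℝ)) z < ⊤ :=
    Filter.Eventually.of_forall fun z => ENNReal.rpow_lt_top_of_nonneg (by norm_num) (hNt z)
  have hdensmeas : Measurable (fun z => N z ^ (2:ℝ)) :=
    ENNReal.continuous_rpow_const.measurable.comp hNmeas
  have hlam_eq : S.lam = lam' := by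
    rw [S.lam_def, hlam']
    apply withDensity_congr_ae
    filter_upwards [hσΩ] with z hz
    rw [hNK z hz, ENNReal.ofReal_rpow_of_pos (S.Knorm_pos z hz),
      show (2:ℝ) = ((2:ℕ):ℝ) by norm_num, Real.rpow_natCast]
  haveI hSF : SigmaFinite lam' := by
    rw [hlam']
    exact SigmaFinite.withDensity_of_ne_top'
      (fun z => ENNReal.rpow_ne_top_of_nonneg (by norm_num) (hNt z))
  have hac : lam' ≪ S.σ := by rw [hlam']; exact withDensity_absolutelyContinuous _ _
  have hlamO : ∀ᵐ z ∂lam', z ∈ S.Ω := hac.ae_le hσΩ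
  set kk : Cn n → Cn n → ℝ≥0∞ :=
    fun z w => (‖Stmt1.Fext S (z, w)‖₊ : ℝ≥0∞) / (N z * N w) with hkk
  have hkk_meas : Measurable (fun q : Cn n × Cn n => kk q.1 q.2) := by
    apply Measurable.div
    · exact (Stmt1.measurable_Fext S).enorm
    · exact (hNmeas.comp measurable_fst).mul (hNmeas.comp measurable_snd)
  have hkk_symm : ∀ z w, kk z w = kk w z := by
    intro z w
    rw [hkk]
    beta_reduce
    rw [Stmt1.Fext_symm_nnnorm, mul_comm (N w) (N z)]
  have hrow : ∀ z ∈ S.Ω, ∫⁻ w, kk z w ∂lam' ≤ C1 := by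
    intro z hz
    have h := hC1 z hz
    simp only [ENNReal.rpow_one] at h
    rw [hlam_eq] at h
    refine le_trans (le_of_eq (lintegral_congr_ae ?_)) h
    filter_upwards [hlamO] with w hw
    rw [hkk]
    beta_reduce
    rw [Stmt1.Fext_eq S hz hw, hNK z hz, hNK w hw]
    rfl
  have hcol : ∀ w ∈ S.Ω, ∫⁻ z, kk z w ∂lam' ≤ C1 := by
    intro w hw
    calc ∫⁻ z, kk z w ∂lam' = ∫⁻ z, kk w z ∂lam' := lintegral_congr fun z => hkk_symm _ _
    _ ≤ C1 := hrow w hw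
  have hwd2 : ∀ h : Cn n → ℝ≥0∞,
      ∫⁻ w, h w ∂lam' = ∫⁻ w, N w ^ (2:ℝ) * h w ∂S.σ := by
    intro h
    rw [hlam']
    exact lintegral_withDensity_eq_lintegral_mul_non_measurable₀ _
      hdensmeas.aemeasurable hdensfin h
  have hstep1 : ∀ (f : Cn n → ℂ) (z : Cn n),
      (‖S.P f z‖₊ : ℝ≥0∞) ≤ ∫⁻ w, (‖Stmt1.F S w z‖₊ : ℝ≥0∞) * ‖f w‖₊ ∂S.σ := by
    intro f z
    have hPz : S.P f z = ∫ w, S.inn (S.K w) (S.K z) * f w ∂S.σ := rfl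
    rw [hPz]
    refine le_trans (enorm_integral_le_lintegral_enorm _)
      (le_of_eq (lintegral_congr fun w => ?_))
    rw [enorm_mul]
    rfl
  constructor
  · -- the L^p case
    intro p hp
    have hp0 : (0:ℝ) < p := lt_of_lt_of_le one_pos hp
    refine ⟨C1, hC1top, ?_⟩
    intro f hf
    set g0 : Cn n → ℝ≥0∞ := fun w => ENNReal.ofReal (S.Knorm w ^ ((2:ℝ) - p)) with hg0
    have hg0fin : ∀ᵐ w ∂S.σ, g0 w < ⊤ :=
      Filter.Eventually.of_forall fun w => ENNReal.ofReal_lt_top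
    have hg0ae : g0 =ᵐ[S.σ] fun w => N w ^ ((2:ℝ) - p) := by
      filter_upwards [hσΩ] with w hw
      rw [hg0]
      beta_reduce
      rw [hNK w hw, ENNReal.ofReal_rpow_of_pos (S.Knorm_pos w hw)]
    have hg0meas : AEMeasurable g0 S.σ :=
      (ENNReal.continuous_rpow_const.measurable.comp hNmeas).aemeasurable.congr hg0ae.symm
    have hq0 : (ENNReal.ofReal p) ≠ 0 := by
      simp only [ne_eq, ENNReal.ofReal_eq_zero, not_le]
      exact hp0
    have hqt : (ENNReal.ofReal p) ≠ ⊤ := ENNReal.ofReal_ne_top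
    rw [eLpNorm_eq_lintegral_rpow_enorm_toReal hq0 hqt, eLpNorm_eq_lintegral_rpow_enorm_toReal hq0 hqt,
      ENNReal.toReal_ofReal hp0.le]
    have hwd : ∀ h : Cn n → ℝ≥0∞,
        ∫⁻ w, h w ∂(S.σ.withDensity g0) = ∫⁻ w, g0 w * h w ∂S.σ := fun h =>
      lintegral_withDensity_eq_lintegral_mul_non_measurable₀ _ hg0meas hg0fin h
    set u : Cn n → ℝ≥0∞ := fun w => (‖f w‖₊ : ℝ≥0∞) / N w with hu_def
    have hu : AEMeasurable u lam' := (hf.enorm.mono_ac hac).div hNmeas.aemeasurable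
    have hufin : ∀ᵐ w ∂lam', u w ≠ ⊤ := by
      filter_upwards [hlamO] with w hw
      exact (ENNReal.div_lt_top ENNReal.coe_ne_top (hN0 w hw)).ne
    set T : Cn n → ℝ≥0∞ := fun z => ∫⁻ w, kk z w * u w ∂lam' with hT
    have hPT : ∀ z ∈ S.Ω, (‖S.P f z‖₊ : ℝ≥0∞) ≤ N z * T z := by
      intro z hz
      refine (hstep1 f z).trans (le_of_eq ?_)
      rw [hT]
      beta_reduce
      rw [hwd2, ← lintegral_const_mul' (N z) _ (hNt z)]
      apply lintegral_congr_ae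
      filter_upwards [hσΩ] with w hw
      have hnum : (‖Stmt1.F S w z‖₊ : ℝ≥0∞) = (‖Stmt1.Fext S (z, w)‖₊ : ℝ≥0∞) := by
        rw [← Stmt1.Fext_eq S hw hz, Stmt1.Fext_symm_nnnorm]
      rw [hnum, hkk, hu_def]
      beta_reduce
      exact (Stmt1.enn_helper1 ENNReal.coe_ne_top ENNReal.coe_ne_top (hN0 z hz) (hNt z)
        (hN0 w hw) (hNt w)).symm
    have hB : ∫⁻ w, g0 w * (‖f w‖₊ : ℝ≥0∞) ^ p ∂S.σ = ∫⁻ w, u w ^ p ∂lam' := by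
      rw [hwd2]
      apply lintegral_congr_ae
      filter_upwards [hσΩ, hg0ae] with w hw hgw
      rw [hgw, hu_def]
      beta_reduce
      exact Stmt1.enn_helper2 (hN0 w hw) (hNt w) hp0
    have hA : ∫⁻ z, g0 z * (‖S.P f z‖₊ : ℝ≥0∞) ^ p ∂S.σ ≤ ∫⁻ z, T z ^ p ∂lam' := by
      rw [hwd2]
      apply lintegral_mono_ae
      filter_upwards [hσΩ, hg0ae] with z hz hgz
      rw [hgz]
      calc N z ^ ((2:ℝ) - p) * (‖S.P f z‖₊ : ℝ≥0∞) ^ p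
          ≤ N z ^ ((2:ℝ) - p) * (N z * T z) ^ p :=
            mul_le_mul_right (ENNReal.rpow_le_rpow (hPT z hz) hp0.le) _
        _ = N z ^ (2:ℝ) * T z ^ p := Stmt1.enn_helper3 (hN0 z hz) (hNt z) hp0.le
    have hSchur : ∫⁻ z, T z ^ p ∂lam' ≤ C1 ^ p * ∫⁻ w, u w ^ p ∂lam' := by
      have hup : AEMeasurable (fun w => u w ^ p) lam' :=
        ENNReal.continuous_rpow_const.measurable.comp_aemeasurable hu
      have hjoint : AEMeasurable (Function.uncurry fun z w => kk z w * u w ^ p)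
          (lam'.prod lam') := by
        refine AEMeasurable.mul hkk_meas.aemeasurable ?_
        exact ENNReal.continuous_rpow_const.measurable.comp_aemeasurable
          ((hu.comp_quasiMeasurePreserving MeasureTheory.Measure.quasiMeasurePreserving_snd))
      have hupfin : ∀ᵐ w ∂lam', u w ^ p ≠ ⊤ := by
        filter_upwards [hufin] with w hw
        exact ENNReal.rpow_ne_top_of_nonneg hp0.le hw
      rcases eq_or_lt_of_le hp with hp1 | hp1
      · -- p = 1
        have hp1' : p = 1 := hp1.symm
        subst hp1'
        simp only [ENNReal.rpow_one]
        have hjoint1 : AEMeasurable (Function.uncurry fun z w => kk z w * u w)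
            (lam'.prod lam') := by
          simpa using hjoint
        calc ∫⁻ z, T z ∂lam' = ∫⁻ w, ∫⁻ z, kk z w * u w ∂lam' ∂lam' :=
              lintegral_lintegral_swap hjoint1
          _ ≤ ∫⁻ w, C1 * u w ∂lam' := by
              apply lintegral_mono_ae
              filter_upwards [hlamO, hufin] with w hw huw
              rw [lintegral_mul_const' _ _ huw]
              exact mul_le_mul_left (hcol w hw) _
          _ = C1 * ∫⁻ w, u w ∂lam' := lintegral_const_mul' _ _ hC1ne
      · -- 1 < p
        have hq := Real.HolderConjugate.conjExponent hp1
        set q := Real.conjExponent p with hqdef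
        have hqpos : 0 < q := hq.symm.pos
        have hsum : 1 / q + 1 / p = 1 := by
          rw [one_div, one_div, add_comm]
          exact hq.inv_add_inv_eq_one
        have hTz : ∀ z ∈ S.Ω, T z ^ p ≤ C1 ^ (p / q) * ∫⁻ w, kk z w * u w ^ p ∂lam' := by
          intro z hz
          have hkzmeas : Measurable (fun w => kk z w) := by
            have hcomp : (fun w => kk z w) =
                (fun q : Cn n × Cn n => kk q.1 q.2) ∘ (fun w => (z, w)) := rfl
            rw [hcomp]
            exact hkk_meas.comp (measurable_const.prodMk measurable_id)
          have hfmeas : AEMeasurable (fun w => kk z w ^ (1 / q)) lam' :=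
            (ENNReal.continuous_rpow_const.measurable.comp hkzmeas).aemeasurable
          have hgmeas : AEMeasurable (fun w => kk z w ^ (1 / p) * u w) lam' :=
            (ENNReal.continuous_rpow_const.measurable.comp hkzmeas).aemeasurable.mul hu
          have hH := ENNReal.lintegral_mul_le_Lp_mul_Lq lam' hq.symm hfmeas hgmeas
          simp only [Pi.mul_apply] at hH
          have hsplit : T z = ∫⁻ w, kk z w ^ (1 / q) * (kk z w ^ (1 / p) * u w) ∂lam' := by
            rw [hT]
            beta_reduce
            refine lintegral_congr fun w => ?_
            rw [← mul_assoc, ← ENNReal.rpow_add_of_nonneg _ _ (by positivity) (by positivity),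
              hsum, ENNReal.rpow_one]
          have e1 : ∫⁻ w, (kk z w ^ (1 / q)) ^ q ∂lam' = ∫⁻ w, kk z w ∂lam' := by
            refine lintegral_congr fun w => ?_
            rw [← ENNReal.rpow_mul, one_div, inv_mul_cancel₀ hqpos.ne', ENNReal.rpow_one]
          have e2 : ∫⁻ w, (kk z w ^ (1 / p) * u w) ^ p ∂lam' =
              ∫⁻ w, kk z w * u w ^ p ∂lam' := by
            refine lintegral_congr fun w => ?_
            rw [ENNReal.mul_rpow_of_nonneg _ _ hp0.le, ← ENNReal.rpow_mul, one_div,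
              inv_mul_cancel₀ hp0.ne', ENNReal.rpow_one]
          rw [← hsplit, e1, e2] at hH
          have hH2 : T z ≤ C1 ^ (1 / q) * (∫⁻ w, kk z w * u w ^ p ∂lam') ^ (1 / p) :=
            hH.trans (mul_le_mul_left
              (ENNReal.rpow_le_rpow (hrow z hz) (by positivity)) _)
          calc T z ^ p ≤ (C1 ^ (1 / q) * (∫⁻ w, kk z w * u w ^ p ∂lam') ^ (1 / p)) ^ p :=
              ENNReal.rpow_le_rpow hH2 hp0.le
            _ = C1 ^ (p / q) * ∫⁻ w, kk z w * u w ^ p ∂lam' := by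
              rw [ENNReal.mul_rpow_of_nonneg _ _ hp0.le, ← ENNReal.rpow_mul,
                ← ENNReal.rpow_mul, show (1 / p) * p = 1 by field_simp,
                ENNReal.rpow_one, show (1 / q) * p = p / q by ring]
        calc ∫⁻ z, T z ^ p ∂lam'
            ≤ ∫⁻ z, C1 ^ (p / q) * ∫⁻ w, kk z w * u w ^ p ∂lam' ∂lam' := by
              apply lintegral_mono_ae
              filter_upwards [hlamO] with z hz
              exact hTz z hz
          _ = C1 ^ (p / q) * ∫⁻ z, ∫⁻ w, kk z w * u w ^ p ∂lam' ∂lam' :=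
              lintegral_const_mul' _ _ (ENNReal.rpow_ne_top_of_nonneg (by positivity) hC1ne)
          _ = C1 ^ (p / q) * ∫⁻ w, ∫⁻ z, kk z w * u w ^ p ∂lam' ∂lam' := by
              rw [lintegral_lintegral_swap hjoint]
          _ ≤ C1 ^ (p / q) * ∫⁻ w, C1 * u w ^ p ∂lam' := by
              apply mul_le_mul_right
              apply lintegral_mono_ae
              filter_upwards [hlamO, hupfin] with w hw huw
              rw [lintegral_mul_const' _ _ huw]
              exact mul_le_mul_left (hcol w hw) _
          _ = C1 ^ (p / q) * (C1 * ∫⁻ w, u w ^ p ∂lam') := by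
              rw [lintegral_const_mul' _ _ hC1ne]
          _ = C1 ^ p * ∫⁻ w, u w ^ p ∂lam' := by
              rw [← mul_assoc]
              congr 1
              conv_lhs => rw [show C1 ^ (p / q) * C1 = C1 ^ (p / q) * C1 ^ (1:ℝ) by
                rw [ENNReal.rpow_one]]
              rw [← ENNReal.rpow_add_of_nonneg _ _ (by positivity) zero_le_one,
                hq.div_conj_eq_sub_one, sub_add_cancel]
    calc (∫⁻ z, (‖S.P f z‖₊ : ℝ≥0∞) ^ p ∂(S.σ.withDensity g0)) ^ (1 / p)
        = (∫⁻ z, g0 z * (‖S.P f z‖₊ : ℝ≥0∞) ^ p ∂S.σ) ^ (1 / p) := by rw [hwd]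
      _ ≤ (C1 ^ p * ∫⁻ w, u w ^ p ∂lam') ^ (1 / p) :=
          ENNReal.rpow_le_rpow (hA.trans hSchur) (by positivity)
      _ = C1 * (∫⁻ w, u w ^ p ∂lam') ^ (1 / p) := by
          rw [ENNReal.mul_rpow_of_nonneg _ _ (by positivity), ← ENNReal.rpow_mul,
            show p * (1 / p) = 1 by field_simp, ENNReal.rpow_one]
      _ = C1 * (∫⁻ w, g0 w * (‖f w‖₊ : ℝ≥0∞) ^ p ∂S.σ) ^ (1 / p) := by rw [hB]
      _ = C1 * (∫⁻ w, (‖f w‖₊ : ℝ≥0∞) ^ p ∂(S.σ.withDensity g0)) ^ (1 / p) := by rw [hwd]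
  · -- the weighted L^∞ case
    refine ⟨C1.toReal, ENNReal.toReal_nonneg, ?_⟩
    intro f hf M hfM z hz
    have hM0 : 0 ≤ M := by
      have h0 := hfM 0 S.zero_mem
      have hK0 := S.Knorm_pos 0 S.zero_mem
      nlinarith [norm_nonneg (f 0)]
    have step2 : ∫⁻ w, (‖Stmt1.F S w z‖₊ : ℝ≥0∞) * ‖f w‖₊ ∂S.σ ≤
        ENNReal.ofReal M * ∫⁻ w, (‖Stmt1.Fext S (z, w)‖₊ : ℝ≥0∞) * N w ∂S.σ := by
      rw [← lintegral_const_mul' _ _ ENNReal.ofReal_ne_top]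
      apply lintegral_mono_ae
      filter_upwards [hσΩ] with w hw
      have hnum : (‖Stmt1.F S w z‖₊ : ℝ≥0∞) = (‖Stmt1.Fext S (z, w)‖₊ : ℝ≥0∞) := by
        rw [← Stmt1.Fext_eq S hw hz, Stmt1.Fext_symm_nnnorm]
      rw [hnum]
      have hfw : (‖f w‖₊ : ℝ≥0∞) ≤ ENNReal.ofReal M * N w := by
        rw [hNK w hw, ← ENNReal.ofReal_mul hM0, ← ENNReal.ofReal_coe_nnreal, coe_nnnorm]
        exact ENNReal.ofReal_le_ofReal (hfM w hw)
      calc (‖Stmt1.Fext S (z, w)‖₊ : ℝ≥0∞) * ‖f w‖₊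
          ≤ (‖Stmt1.Fext S (z, w)‖₊ : ℝ≥0∞) * (ENNReal.ofReal M * N w) :=
            mul_le_mul_right hfw _
        _ = ENNReal.ofReal M * ((‖Stmt1.Fext S (z, w)‖₊ : ℝ≥0∞) * N w) := by ring
    have step3 : ∫⁻ w, (‖Stmt1.Fext S (z, w)‖₊ : ℝ≥0∞) * N w ∂S.σ ≤ N z * C1 := by
      calc ∫⁻ w, (‖Stmt1.Fext S (z, w)‖₊ : ℝ≥0∞) * N w ∂S.σ
          = ∫⁻ w, N z * (N w ^ (2:ℝ) * kk z w) ∂S.σ := by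
            apply lintegral_congr_ae
            filter_upwards [hσΩ] with w hw
            rw [hkk]
            beta_reduce
            exact (Stmt1.enn_helper4 ENNReal.coe_ne_top (hN0 z hz) (hNt z)
              (hN0 w hw) (hNt w)).symm
        _ = N z * ∫⁻ w, N w ^ (2:ℝ) * kk z w ∂S.σ := lintegral_const_mul' _ _ (hNt z)
        _ = N z * ∫⁻ w, kk z w ∂lam' := by rw [hwd2]
        _ ≤ N z * C1 := mul_le_mul_right (hrow z hz) _
    have key : (‖S.P f z‖₊ : ℝ≥0∞) ≤ ENNReal.ofReal M * (N z * C1) :=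
      (hstep1 f z).trans (step2.trans (mul_le_mul_right step3 _))
    have hfin : ENNReal.ofReal M * (N z * C1) ≠ ⊤ :=
      ENNReal.mul_ne_top ENNReal.ofReal_ne_top (ENNReal.mul_ne_top (hNt z) hC1ne)
    have hreal := ENNReal.toReal_mono hfin key
    rw [ENNReal.toReal_mul, ENNReal.toReal_mul, ENNReal.coe_toReal,
      ENNReal.toReal_ofReal hM0, hNK z hz,
      ENNReal.toReal_ofReal (le_of_lt (S.Knorm_pos z hz))] at hreal
    calc ‖S.P f z‖ = (‖S.P f z‖₊ : ℝ) := (coe_nnnorm _).symm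
      _ ≤ M * (S.Knorm z * C1.toReal) := hreal
      _ = C1.toReal * M * S.Knorm z := by ring
end
end

section
/- Let B(Ω) be a Bergman-type space with κ > 0, and let P f(z) := ∫_Ω ⟨K_w, K_z⟩ f(w) dσ(w) be the projection operator. Then P is bounded as an operator from L^p(Ω; dσ) into L^p(Ω; dσ) for all 1 < p < ∞. -/
open MeasureTheory Filter Topology Set ENNReal

noncomputable section

namespace BergmanTypeSpace

variable {n : ℕ} (S : BergmanTypeSpace n)

lemma measurableSet_omega : MeasurableSet S.Ω := S.isOpen_domain.measurableSet

lemma ae_mem : ∀ᵐ z ∂S.σ, z ∈ S.Ω := by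
  have h := S.σ_carried
  rw [MeasureTheory.ae_iff]
  simpa [Set.compl_def] using h

lemma inn_K_eq {z w : Cn n} (hz : z ∈ S.Ω) (hw : w ∈ S.Ω) :
    S.inn (S.K z) (S.K w) = S.K z w :=
  (S.K_reproducing (S.K z) (S.K_holo z hz) (S.K_memL2 z hz) w hw).symm

lemma inn_conj (f g : Cn n → ℂ) : S.inn f g = (starRingEnd ℂ) (S.inn g f) := by
  unfold inn
  rw [← integral_conj]
  congr 1; funext u; simp [map_mul]; ring

lemma K_symm {z w : Cn n} (hz : z ∈ S.Ω) (hw : w ∈ S.Ω) :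
    S.K w z = (starRingEnd ℂ) (S.K z w) := by
  rw [← S.inn_K_eq hw hz, ← S.inn_K_eq hz hw, inn_conj]

lemma K_diag_re {z : Cn n} (hz : z ∈ S.Ω) : (S.K z z).re = S.Knorm z ^ 2 := by
  have h1 : S.K z z = S.inn (S.K z) (S.K z) := (S.inn_K_eq hz hz).symm
  have h2 : S.inn (S.K z) (S.K z) = ((∫ u, ‖S.K z u‖ ^ 2 ∂S.σ : ℝ) : ℂ) := by
    unfold inn
    calc ∫ w, S.K z w * (starRingEnd ℂ) (S.K z w) ∂S.σ
        = ∫ w, ((‖S.K z w‖ ^ 2 : ℝ) : ℂ) ∂S.σ := by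
          congr 1; funext u
          rw [Complex.mul_conj]
          norm_cast
          rw [Complex.normSq_eq_norm_sq]
      _ = ((∫ u, ‖S.K z u‖ ^ 2 ∂S.σ : ℝ) : ℂ) := integral_ofReal
  rw [h1, h2, Complex.ofReal_re, S.Knorm_def, Real.sq_sqrt]
  exact integral_nonneg fun u => sq_nonneg _

/-- The embedding `Ω × Ω → ℂⁿ × ℂⁿ`. -/
def emb : ↥S.Ω × ↥S.Ω → Cn n × Cn n := fun p => (p.1.1, p.2.1)

/-- A jointly measurable extension of the kernel `K`. -/
def KK : Cn n × Cn n → ℂ :=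
  Function.extend S.emb (fun p => S.K p.1.1 p.2.1) 0

lemma measurable_KK : Measurable S.KK := by
  have hΩ := S.measurableSet_omega
  have hemb : MeasurableEmbedding S.emb :=
    (MeasurableEmbedding.subtype_coe hΩ).prodMap (MeasurableEmbedding.subtype_coe hΩ)
  have hu : Measurable (Function.uncurry (fun (a : ↥S.Ω) (b : ↥S.Ω) => S.K a.1 b.1)) := by
    apply measurable_uncurry_of_continuous_of_measurable
    · intro b
      have he : (fun a : ↥S.Ω => S.K a.1 b.1)
          = fun a : ↥S.Ω => (starRingEnd ℂ) (S.K b.1 a.1) := by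
        funext a; exact S.K_symm b.2 a.2
      rw [he]
      exact Complex.continuous_conj.comp
        ((S.K_holo b.1 b.2).continuousOn.restrict)
    · intro a
      exact ((S.K_holo a.1 a.2).continuousOn.restrict).measurable
  exact hemb.measurable_extend hu measurable_const

lemma emb_injective : Function.Injective S.emb := by
  rintro ⟨a1, a2⟩ ⟨b1, b2⟩ h
  simp only [emb, Prod.ext_iff] at h
  exact Prod.ext (Subtype.ext h.1) (Subtype.ext h.2)

lemma KK_eq {z w : Cn n} (hz : z ∈ S.Ω) (hw : w ∈ S.Ω) : S.KK (z, w) = S.K z w := by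
  have := S.emb_injective.extend_apply (fun p : ↥S.Ω × ↥S.Ω => S.K p.1.1 p.2.1) 0
    (⟨⟨z, hz⟩, ⟨w, hw⟩⟩)
  simpa [KK, emb] using this

lemma KK_zero {z w : Cn n} (h : ¬(z ∈ S.Ω ∧ w ∈ S.Ω)) : S.KK (z, w) = 0 := by
  rw [KK, Function.extend_apply']
  · rfl
  · rintro ⟨⟨a, b⟩, hab⟩
    simp only [emb, Prod.ext_iff] at hab
    exact h ⟨hab.1 ▸ a.2, hab.2 ▸ b.2⟩

/-- A jointly measurable version of `|⟨K_w, K_z⟩|` (equal to `‖K z w‖₊` on `Ω × Ω`). -/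
def Tk : Cn n × Cn n → ℝ≥0∞ := fun p => (‖S.KK p‖₊ : ℝ≥0∞)

lemma measurable_Tk : Measurable S.Tk := S.measurable_KK.nnnorm.coe_nnreal_ennreal

lemma Tk_ne_top (p : Cn n × Cn n) : S.Tk p ≠ ⊤ := ENNReal.coe_ne_top

lemma Tk_symm (z w : Cn n) : S.Tk (z, w) = S.Tk (w, z) := by
  by_cases hz : z ∈ S.Ω
  · by_cases hw : w ∈ S.Ω
    · unfold Tk
      rw [S.KK_eq hz hw, S.KK_eq hw hz, S.K_symm hz hw]
      simp
    · unfold Tk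
      rw [S.KK_zero (fun h => hw h.2), S.KK_zero (fun h => hw h.1)]
  · unfold Tk
    rw [S.KK_zero (fun h => hz h.1), S.KK_zero (fun h => hz h.2)]

/-- Measurable version of `‖K_z‖² = K(z,z)`. -/
def HD : Cn n → ℝ≥0∞ := fun z => ENNReal.ofReal ((S.KK (z, z)).re)

lemma measurable_HD : Measurable S.HD :=
  ENNReal.measurable_ofReal.comp
    (Complex.measurable_re.comp (S.measurable_KK.comp (measurable_id.prodMk measurable_id)))

lemma HD_eq {z : Cn n} (hz : z ∈ S.Ω) : S.HD z = ENNReal.ofReal (S.Knorm z ^ 2) := by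
  rw [HD, S.KK_eq hz hz, S.K_diag_re hz]

lemma HD_ne_top (z : Cn n) : S.HD z ≠ ⊤ := ENNReal.ofReal_ne_top

lemma HD_ne_zero {z : Cn n} (hz : z ∈ S.Ω) : S.HD z ≠ 0 := by
  rw [S.HD_eq hz]
  simpa [ENNReal.ofReal_eq_zero, not_le] using (S.Knorm_pos z hz).ne'

lemma HD_rpow {z : Cn n} (hz : z ∈ S.Ω) (a : ℝ) :
    S.HD z ^ (a / 2) = ENNReal.ofReal (S.Knorm z) ^ a := by
  rw [S.HD_eq hz, ENNReal.ofReal_pow (S.Knorm_pos z hz).le, ← ENNReal.rpow_natCast,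
    ← ENNReal.rpow_mul]
  congr 1
  push_cast
  ring

lemma density_aemeasurable :
    AEMeasurable (fun z => ENNReal.ofReal (S.Knorm z ^ 2)) S.σ :=
  ⟨S.HD, S.measurable_HD, S.ae_mem.mono fun z hz => (S.HD_eq hz).symm⟩

lemma lintegral_lam (F : Cn n → ℝ≥0∞) :
    ∫⁻ w, F w ∂S.lam = ∫⁻ w, ENNReal.ofReal (S.Knorm w ^ 2) * F w ∂S.σ := by
  rw [S.lam_def]
  exact lintegral_withDensity_eq_lintegral_mul_non_measurable₀ _ S.density_aemeasurable
    (Filter.Eventually.of_forall fun x => ENNReal.ofReal_lt_top) F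

/-- The key Schur-type estimate extracted from the Rudin--Forelli inequalities. -/
lemma key (hκ : 0 < S.κ) {a : ℝ} (ha : 0 < a) (haκ : a < S.κ) (ha2 : a < 2 - S.κ) :
    ∃ C : ℝ≥0∞, C ≠ ⊤ ∧ ∀ z ∈ S.Ω,
      ∫⁻ w, S.Tk (z, w) * S.HD w ^ (a / 2) ∂S.σ ≤ C * S.HD z ^ (a / 2) := by
  have hRF := S.rudinForelli.resolve_left (by rintro ⟨h0, -⟩; linarith)
  obtain ⟨-, hRF⟩ := hRF
  obtain ⟨C, hC, hRF⟩ := hRF (2 - a) a (by linarith) ha haκ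
  refine ⟨C, hC.ne, fun z hz => ?_⟩
  set Kz : ℝ≥0∞ := ENNReal.ofReal (S.Knorm z) with hKzdef
  have hKz0 : Kz ≠ 0 := by
    simpa [hKzdef, ENNReal.ofReal_eq_zero, not_le] using S.Knorm_pos z hz
  have hKzt : Kz ≠ ⊤ := ENNReal.ofReal_ne_top
  have hKza0 : Kz ^ a ≠ 0 := (ENNReal.rpow_pos (pos_iff_ne_zero.2 hKz0) hKzt).ne'
  have hKzat : Kz ^ a ≠ ⊤ := ENNReal.rpow_ne_top_of_nonneg ha.le hKzt
  set F : Cn n → ℝ≥0∞ := fun w =>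
    (‖∫ u, S.K z u * (starRingEnd ℂ) (S.K w u) ∂S.σ‖₊ : ℝ≥0∞) ^ ((2 - a + a) / 2) /
      (ENNReal.ofReal (S.Knorm z) ^ a * ENNReal.ofReal (S.Knorm w) ^ (2 - a)) with hFdef
  have step1 : ∫⁻ w, S.Tk (z, w) * S.HD w ^ (a / 2) ∂S.σ
      = ∫⁻ w, Kz ^ a * (ENNReal.ofReal (S.Knorm w ^ 2) * F w) ∂S.σ := by
    refine lintegral_congr_ae (S.ae_mem.mono fun w hw => ?_)
    set Kw : ℝ≥0∞ := ENNReal.ofReal (S.Knorm w) with hKwdef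
    have hKw0 : Kw ≠ 0 := by
      simpa [hKwdef, ENNReal.ofReal_eq_zero, not_le] using S.Knorm_pos w hw
    have hKwt : Kw ≠ ⊤ := ENNReal.ofReal_ne_top
    set N : ℝ≥0∞ := (‖S.K z w‖₊ : ℝ≥0∞) with hNdef
    have hTkN : S.Tk (z, w) = N := by rw [Tk, S.KK_eq hz hw]
    have hinner : (∫ u, S.K z u * (starRingEnd ℂ) (S.K w u) ∂S.σ) = S.K z w :=
      S.inn_K_eq hz hw
    have hexp : (2 - a + a) / 2 = (1 : ℝ) := by ring
    have hFw : F w = N / (Kz ^ a * Kw ^ (2 - a)) := by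
      rw [hFdef]
      simp only
      rw [hinner, hexp, ENNReal.rpow_one]
    have hD2 : ENNReal.ofReal (S.Knorm w ^ 2) = Kw ^ (2 : ℝ) := by
      rw [hKwdef, ENNReal.ofReal_pow (S.Knorm_pos w hw).le, ← ENNReal.rpow_natCast]
      norm_num
    have hHDw : S.HD w ^ (a / 2) = Kw ^ a := S.HD_rpow hw a
    set D : ℝ≥0∞ := Kz ^ a * Kw ^ (2 - a) with hDdef
    have hD0 : D ≠ 0 :=
      mul_ne_zero hKza0 (ENNReal.rpow_pos (pos_iff_ne_zero.2 hKw0) hKwt).ne'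
    have hDt : D ≠ ⊤ :=
      ENNReal.mul_ne_top hKzat (ENNReal.rpow_ne_top_of_nonneg (by linarith) hKwt)
    show S.Tk (z, w) * S.HD w ^ (a / 2) = Kz ^ a * (ENNReal.ofReal (S.Knorm w ^ 2) * F w)
    rw [hTkN, hHDw, hFw, hD2]
    have hsplit : Kw ^ a * Kw ^ (2 - a) = Kw ^ (2 : ℝ) := by
      rw [← ENNReal.rpow_add _ _ hKw0 hKwt]; norm_num
    rw [← mul_div_assoc, ← mul_div_assoc, ENNReal.eq_div_iff hD0 hDt, hDdef, ← hsplit]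
    ring
  rw [step1, lintegral_const_mul' _ _ hKzat]
  have step2 : ∫⁻ w, ENNReal.ofReal (S.Knorm w ^ 2) * F w ∂S.σ ≤ C := by
    rw [← S.lintegral_lam F]
    exact hRF z hz
  calc Kz ^ a * ∫⁻ w, ENNReal.ofReal (S.Knorm w ^ 2) * F w ∂S.σ
      ≤ Kz ^ a * C := mul_le_mul_right step2 _
    _ = C * S.HD z ^ (a / 2) := by rw [S.HD_rpow hz a, mul_comm]

end BergmanTypeSpace

/-- A Schur test for integral operators with nonnegative kernels. -/
theorem schur_test {X : Type*} [MeasurableSpace X] (μ : Measure X) [IsFiniteMeasure μ]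
    (T : X × X → ℝ≥0∞) (hT : Measurable T) (hTfin : ∀ p, T p ≠ ⊤)
    (h : X → ℝ≥0∞) (hh : Measurable h)
    (hpos : ∀ᵐ z ∂μ, h z ≠ 0) (hfin : ∀ z, h z ≠ ⊤)
    {p q : ℝ} (hp : 1 < p) (hq : 1 < q) (hpq : 1 / p + 1 / q = 1)
    {C₁ C₂ : ℝ≥0∞} (hC₁ : C₁ ≠ ⊤)
    (H₁ : ∀ᵐ z ∂μ, ∫⁻ w, T (z, w) * h w ^ q ∂μ ≤ C₁ * h z ^ q)
    (H₂ : ∀ᵐ w ∂μ, ∫⁻ z, T (z, w) * h z ^ p ∂μ ≤ C₂ * h w ^ p)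
    (g : X → ℝ≥0∞) (hg : Measurable g) :
    ∫⁻ z, (∫⁻ w, T (z, w) * g w ∂μ) ^ p ∂μ ≤ C₁ ^ (p / q) * C₂ * ∫⁻ w, g w ^ p ∂μ := by
  have hp0 : (0 : ℝ) < p := lt_trans one_pos hp
  have hq0 : (0 : ℝ) < q := lt_trans one_pos hq
  have hconj : p.HolderConjugate q := Real.holderConjugate_iff.mpr ⟨hp, by rw [← one_div, ← one_div]; exact hpq⟩
  set B : X → ℝ≥0∞ := fun z => ∫⁻ w, T (z, w) * g w ^ p * (h w ^ p)⁻¹ ∂μ with hBdef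
  have stepA : ∀ᵐ z ∂μ, (∫⁻ w, T (z, w) * g w ∂μ) ^ p ≤ C₁ ^ (p / q) * (h z ^ p * B z) := by
    filter_upwards [H₁] with z hz1
    have hTz : Measurable fun w => T (z, w) := hT.comp (measurable_prodMk_left)
    have key1 : ∫⁻ w, T (z, w) * g w ∂μ ≤ B z ^ (1 / p) * (C₁ * h z ^ q) ^ (1 / q) := by
      have hsplit : ∀ᵐ w ∂μ, T (z, w) * g w
          = (T (z, w) ^ (1 / p) * g w * (h w)⁻¹) * (T (z, w) ^ (1 / q) * h w) := by
        filter_upwards [hpos] with w hw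
        rcases eq_or_ne (T (z, w)) 0 with h0 | h0
        · rw [h0, ENNReal.zero_rpow_of_pos (by positivity), ENNReal.zero_rpow_of_pos (by positivity)]
          simp
        · have hTT : T (z, w) ^ (1 / p) * T (z, w) ^ (1 / q) = T (z, w) := by
            rw [← ENNReal.rpow_add _ _ h0 (hTfin _), hpq, ENNReal.rpow_one]
          calc T (z, w) * g w
              = (T (z, w) ^ (1 / p) * T (z, w) ^ (1 / q)) * g w * ((h w)⁻¹ * h w) := by
                rw [hTT, ENNReal.inv_mul_cancel hw (hfin w), mul_one]
            _ = (T (z, w) ^ (1 / p) * g w * (h w)⁻¹) * (T (z, w) ^ (1 / q) * h w) := by ring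
      rw [lintegral_congr_ae hsplit]
      have hf1 : AEMeasurable (fun w => T (z, w) ^ (1 / p) * g w * (h w)⁻¹) μ :=
        (((hTz.pow_const _).mul hg).mul hh.inv).aemeasurable
      have hf2 : AEMeasurable (fun w => T (z, w) ^ (1 / q) * h w) μ :=
        ((hTz.pow_const _).mul hh).aemeasurable
      have hhold := ENNReal.lintegral_mul_le_Lp_mul_Lq μ hconj hf1 hf2
      simp only [Pi.mul_apply] at hhold
      refine hhold.trans ?_
      have e1 : ∀ w, (T (z, w) ^ (1 / p) * g w * (h w)⁻¹) ^ p
          = T (z, w) * g w ^ p * (h w ^ p)⁻¹ := by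
        intro w
        rw [ENNReal.mul_rpow_of_nonneg _ _ hp0.le, ENNReal.mul_rpow_of_nonneg _ _ hp0.le,
          ← ENNReal.rpow_mul, one_div_mul_cancel hp0.ne', ENNReal.rpow_one, ENNReal.inv_rpow]
      have e2 : ∀ w, (T (z, w) ^ (1 / q) * h w) ^ q = T (z, w) * h w ^ q := by
        intro w
        rw [ENNReal.mul_rpow_of_nonneg _ _ hq0.le, ← ENNReal.rpow_mul,
          one_div_mul_cancel hq0.ne', ENNReal.rpow_one]
      have eB : (∫⁻ w, (T (z, w) ^ (1 / p) * g w * (h w)⁻¹) ^ p ∂μ) = B z := by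
        rw [hBdef]; exact lintegral_congr fun w => e1 w
      have e2' : (∫⁻ w, (T (z, w) ^ (1 / q) * h w) ^ q ∂μ) ≤ C₁ * h z ^ q := by
        refine le_trans (le_of_eq (lintegral_congr fun w => e2 w)) hz1
      rw [eB]
      exact mul_le_mul_right (ENNReal.rpow_le_rpow e2' (by positivity)) _
    calc (∫⁻ w, T (z, w) * g w ∂μ) ^ p
        ≤ (B z ^ (1 / p) * (C₁ * h z ^ q) ^ (1 / q)) ^ p := ENNReal.rpow_le_rpow key1 hp0.le
      _ = C₁ ^ (p / q) * (h z ^ p * B z) := by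
          rw [ENNReal.mul_rpow_of_nonneg _ _ hp0.le, ENNReal.mul_rpow_of_nonneg _ _ (by positivity : (0:ℝ) ≤ 1/q),
            ← ENNReal.rpow_mul, one_div_mul_cancel hp0.ne', ENNReal.rpow_one,
            ENNReal.mul_rpow_of_nonneg _ _ hp0.le, ← ENNReal.rpow_mul, ← ENNReal.rpow_mul,
            ← ENNReal.rpow_mul]
          rw [show (1 : ℝ) / q * p = p / q from by ring,
            show q * (p / q) = p from by field_simp]
          ring
  have stepB : ∫⁻ z, (∫⁻ w, T (z, w) * g w ∂μ) ^ p ∂μ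
      ≤ C₁ ^ (p / q) * ∫⁻ z, h z ^ p * B z ∂μ := by
    refine (lintegral_mono_ae stepA).trans ?_
    rw [lintegral_const_mul' _ _ (ENNReal.rpow_ne_top_of_nonneg (by positivity) hC₁)]
  have hswapm : Measurable (Function.uncurry fun z w =>
      h z ^ p * (T (z, w) * g w ^ p * (h w ^ p)⁻¹)) := by
    have h1 : Measurable fun r : X × X => h r.1 ^ p := (hh.comp measurable_fst).pow_const _
    have h2 : Measurable fun r : X × X => g r.2 ^ p := (hg.comp measurable_snd).pow_const _
    have h3 : Measurable fun r : X × X => (h r.2 ^ p)⁻¹ :=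
      ((hh.comp measurable_snd).pow_const _).inv
    exact h1.mul ((hT.mul h2).mul h3)
  have stepC : ∫⁻ z, h z ^ p * B z ∂μ ≤ C₂ * ∫⁻ w, g w ^ p ∂μ := by
    have swap : ∫⁻ z, h z ^ p * B z ∂μ
        = ∫⁻ w, g w ^ p * (h w ^ p)⁻¹ * (∫⁻ z, T (z, w) * h z ^ p ∂μ) ∂μ := by
      have e : ∀ z, h z ^ p * B z
          = ∫⁻ w, h z ^ p * (T (z, w) * g w ^ p * (h w ^ p)⁻¹) ∂μ := by
        intro z
        have hm : Measurable fun w => T (z, w) * g w ^ p * (h w ^ p)⁻¹ :=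
          ((hT.comp measurable_prodMk_left).mul (hg.pow_const _)).mul ((hh.pow_const _).inv)
        exact (lintegral_const_mul _ hm).symm
      rw [lintegral_congr e, lintegral_lintegral_swap hswapm.aemeasurable]
      refine lintegral_congr fun w => ?_
      have hm : Measurable fun z => T (z, w) * h z ^ p :=
        (hT.comp measurable_prodMk_right).mul (hh.pow_const _)
      rw [← lintegral_const_mul _ hm]
      exact lintegral_congr fun z => by ring
    rw [swap]
    calc ∫⁻ w, g w ^ p * (h w ^ p)⁻¹ * (∫⁻ z, T (z, w) * h z ^ p ∂μ) ∂μ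
        ≤ ∫⁻ w, g w ^ p * (h w ^ p)⁻¹ * (C₂ * h w ^ p) ∂μ :=
          lintegral_mono_ae (H₂.mono fun w hw => mul_le_mul_right hw _)
      _ = ∫⁻ w, C₂ * g w ^ p ∂μ := by
          refine lintegral_congr_ae (hpos.mono fun w hw => ?_)
          have hne : h w ^ p ≠ 0 := (ENNReal.rpow_pos (pos_iff_ne_zero.2 hw) (hfin w)).ne'
          have hnt : h w ^ p ≠ ⊤ := ENNReal.rpow_ne_top_of_nonneg hp0.le (hfin w)
          calc g w ^ p * (h w ^ p)⁻¹ * (C₂ * h w ^ p)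
              = C₂ * g w ^ p * ((h w ^ p)⁻¹ * h w ^ p) := by ring
            _ = C₂ * g w ^ p := by rw [ENNReal.inv_mul_cancel hne hnt, mul_one]
      _ = C₂ * ∫⁻ w, g w ^ p ∂μ := lintegral_const_mul _ (hg.pow_const _)
  calc ∫⁻ z, (∫⁻ w, T (z, w) * g w ∂μ) ^ p ∂μ
      ≤ C₁ ^ (p / q) * ∫⁻ z, h z ^ p * B z ∂μ := stepB
    _ ≤ C₁ ^ (p / q) * (C₂ * ∫⁻ w, g w ^ p ∂μ) := mul_le_mul_right stepC _
    _ = C₁ ^ (p / q) * C₂ * ∫⁻ w, g w ^ p ∂μ := by rw [mul_assoc]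

/-- for `κ > 0` the projection `P` is bounded on `L^p(Ω; dσ)`
for all `1 < p < ∞`. -/
theorem statement2 (n : ℕ) (S : BergmanTypeSpace n) (hκ : 0 < S.κ) :
    ∀ p : ℝ, 1 < p → ∃ C : ℝ≥0∞, C < ⊤ ∧ ∀ f : Cn n → ℂ, AEStronglyMeasurable f S.σ →
      eLpNorm (S.P f) (ENNReal.ofReal p) S.σ ≤ C * eLpNorm f (ENNReal.ofReal p) S.σ := by
  intro p hp
  haveI : IsFiniteMeasure S.σ := S.σ_finite
  have hp0 : (0 : ℝ) < p := lt_trans one_pos hp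
  set q : ℝ := p / (p - 1) with hqdef
  have hpm1 : (0 : ℝ) < p - 1 := by linarith
  have hq : 1 < q := by rw [hqdef, lt_div_iff₀ hpm1]; linarith
  have hq0 : (0 : ℝ) < q := lt_trans one_pos hq
  have hpq : 1 / p + 1 / q = 1 := by
    have h1 : p ≠ 0 := hp0.ne'
    have h2 : p - 1 ≠ 0 := hpm1.ne'
    rw [hqdef]
    field_simp
    ring
  set m : ℝ := min S.κ (2 - S.κ) with hmdef
  have hm : 0 < m := lt_min hκ (by linarith [S.κ_lt_two])
  set t : ℝ := m / (2 * (p + q)) with htdef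
  have hpq0 : (0 : ℝ) < p + q := by linarith
  have ht : 0 < t := div_pos hm (by linarith)
  have htq : t * q < m := by
    rw [htdef, div_mul_eq_mul_div, div_lt_iff₀ (by linarith : (0:ℝ) < 2 * (p + q))]
    nlinarith
  have htp : t * p < m := by
    rw [htdef, div_mul_eq_mul_div, div_lt_iff₀ (by linarith : (0:ℝ) < 2 * (p + q))]
    nlinarith
  have hmκ : m ≤ S.κ := min_le_left _ _
  have hm2 : m ≤ 2 - S.κ := min_le_right _ _
  obtain ⟨C₁, hC₁, hK₁⟩ := S.key hκ (a := t * q) (mul_pos ht hq0)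
    (lt_of_lt_of_le htq hmκ) (by linarith)
  obtain ⟨C₂, hC₂, hK₂⟩ := S.key hκ (a := t * p) (mul_pos ht hp0)
    (lt_of_lt_of_le htp hmκ) (by linarith)
  set hW : Cn n → ℝ≥0∞ := fun z => S.HD z ^ (t / 2) with hWdef
  have hWm : Measurable hW := S.measurable_HD.pow_const _
  have hWfin : ∀ z, hW z ≠ ⊤ := fun z =>
    ENNReal.rpow_ne_top_of_nonneg (by linarith) (S.HD_ne_top z)
  have hWpos : ∀ᵐ z ∂S.σ, hW z ≠ 0 := S.ae_mem.mono fun z hz =>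
    (ENNReal.rpow_pos (pos_iff_ne_zero.2 (S.HD_ne_zero hz)) (S.HD_ne_top z)).ne'
  have hpow : ∀ (x : ℝ≥0∞) (b : ℝ), (x ^ (t / 2)) ^ b = x ^ (t * b / 2) := by
    intro x b
    rw [← ENNReal.rpow_mul]
    congr 1; ring
  have H₁ : ∀ᵐ z ∂S.σ, ∫⁻ w, S.Tk (z, w) * hW w ^ q ∂S.σ ≤ C₁ * hW z ^ q := by
    filter_upwards [S.ae_mem] with z hz
    calc ∫⁻ w, S.Tk (z, w) * hW w ^ q ∂S.σ
        = ∫⁻ w, S.Tk (z, w) * S.HD w ^ (t * q / 2) ∂S.σ := by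
          refine lintegral_congr fun w => ?_
          rw [hWdef]; simp only; rw [hpow]
      _ ≤ C₁ * S.HD z ^ (t * q / 2) := hK₁ z hz
      _ = C₁ * hW z ^ q := by rw [hWdef]; simp only; rw [hpow]
  have H₂ : ∀ᵐ w ∂S.σ, ∫⁻ z, S.Tk (z, w) * hW z ^ p ∂S.σ ≤ C₂ * hW w ^ p := by
    filter_upwards [S.ae_mem] with w hw
    calc ∫⁻ z, S.Tk (z, w) * hW z ^ p ∂S.σ
        = ∫⁻ z, S.Tk (w, z) * S.HD z ^ (t * p / 2) ∂S.σ := by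
          refine lintegral_congr fun z => ?_
          rw [hWdef]; simp only; rw [hpow, S.Tk_symm]
      _ ≤ C₂ * S.HD w ^ (t * p / 2) := hK₂ w hw
      _ = C₂ * hW w ^ p := by rw [hWdef]; simp only; rw [hpow]
  refine ⟨(C₁ ^ (p / q) * C₂) ^ (1 / p), ?_, ?_⟩
  · exact ENNReal.rpow_lt_top_of_nonneg (by positivity)
      (ENNReal.mul_ne_top (ENNReal.rpow_ne_top_of_nonneg (by positivity) hC₁) hC₂)
  intro f hf
  obtain ⟨f₀, hf₀m, hff₀⟩ := hf
  set g : Cn n → ℝ≥0∞ := fun w => (‖f₀ w‖₊ : ℝ≥0∞) with hgdef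
  have hgm : Measurable g := hf₀m.measurable.nnnorm.coe_nnreal_ennreal
  have hgf : ∀ᵐ w ∂S.σ, (‖f w‖₊ : ℝ≥0∞) = g w := hff₀.mono fun w hw => by
    rw [hgdef]; simp only; rw [hw]
  have hbound : ∀ᵐ z ∂S.σ, (‖S.P f z‖₊ : ℝ≥0∞) ≤ ∫⁻ w, S.Tk (z, w) * g w ∂S.σ := by
    filter_upwards [S.ae_mem] with z hz
    refine (enorm_integral_le_lintegral_enorm _).trans ?_
    refine le_of_eq (lintegral_congr_ae ?_)
    filter_upwards [S.ae_mem, hgf] with w hw hgw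
    have h1 : S.inn (S.K w) (S.K z) = S.K w z := S.inn_K_eq hw hz
    have h2 : (‖S.inn (S.K w) (S.K z)‖₊ : ℝ≥0∞) = S.Tk (z, w) := by
      rw [h1]
      unfold BergmanTypeSpace.Tk
      rw [S.KK_eq hz hw, S.K_symm hz hw]
      simp
    rw [enorm_mul, ← h2, ← hgw]
    rfl
  have schur := schur_test S.σ S.Tk S.measurable_Tk S.Tk_ne_top hW hWm hWpos hWfin
    hp hq hpq hC₁ H₁ H₂ g hgm
  have main : ∫⁻ z, (‖S.P f z‖₊ : ℝ≥0∞) ^ p ∂S.σ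
      ≤ (C₁ ^ (p / q) * C₂) * ∫⁻ w, (‖f w‖₊ : ℝ≥0∞) ^ p ∂S.σ := by
    have step1 : ∫⁻ z, (‖S.P f z‖₊ : ℝ≥0∞) ^ p ∂S.σ
        ≤ ∫⁻ z, (∫⁻ w, S.Tk (z, w) * g w ∂S.σ) ^ p ∂S.σ :=
      lintegral_mono_ae (hbound.mono fun z hz => ENNReal.rpow_le_rpow hz hp0.le)
    have step2 : ∫⁻ w, g w ^ p ∂S.σ = ∫⁻ w, (‖f w‖₊ : ℝ≥0∞) ^ p ∂S.σ :=
      lintegral_congr_ae (hgf.mono fun w hw => by simp only [← hw])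
    exact step1.trans (schur.trans_eq (by rw [step2]))
  have hone : ENNReal.ofReal p ≠ 0 := by
    simp only [ne_eq, ENNReal.ofReal_eq_zero, not_le]
    exact hp0
  rw [eLpNorm_eq_lintegral_rpow_enorm_toReal hone ENNReal.ofReal_ne_top,
    eLpNorm_eq_lintegral_rpow_enorm_toReal hone ENNReal.ofReal_ne_top,
    ENNReal.toReal_ofReal hp0.le]
  calc (∫⁻ z, (‖S.P f z‖₊ : ℝ≥0∞) ^ p ∂S.σ) ^ (1 / p)
      ≤ ((C₁ ^ (p / q) * C₂) * ∫⁻ w, (‖f w‖₊ : ℝ≥0∞) ^ p ∂S.σ) ^ (1 / p) :=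
        ENNReal.rpow_le_rpow main (by positivity)
    _ = (C₁ ^ (p / q) * C₂) ^ (1 / p) * (∫⁻ w, (‖f w‖₊ : ℝ≥0∞) ^ p ∂S.σ) ^ (1 / p) :=
        ENNReal.mul_rpow_of_nonneg _ _ (by positivity)
end
end
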